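/- arXiv:1408.1903 — 3 statements merged into one kernel-verified Lean document; each statement's English description precedes it below -/
import Mathlib

section
/- Let f : W → M be a morphism of Wall forms, where W = W¹ is the standard Wall form of rank 1. Then f is split-injective (both components of f are injective, and the inclusion of the image splits), and there is an orthogonal direct-sum decomposition M = f(W) ⊥ f(W)^⊥ of M into the image of f and its orthogonal complement. -/
/-!
Framework: `H`-pairs and Wall forms, following N. Perlmutter,
"Homological stability for the moduli spaces of products of spheres".

A form parameter `(G, ∂, π, ε)` is recorded together with the two
compatibility identities `∂(ε•h) = ∂(h)` and `π(∂(h)) = h + ε•h`, which hold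
in the geometric situation considered in the paper and which are exactly the
conditions needed for the standard Wall forms `W^g` to exist.
-/

section HPairs

/-- An `H`-pair: a pair of abelian groups together with a ℤ-bilinear
(i.e. biadditive) map `τ : M₋ × H → M₊`. -/
structure HPair (H : Type) [AddCommGroup H] where
  Neg : Type
  Pos : Type
  [negGrp : AddCommGroup Neg]
  [posGrp : AddCommGroup Pos]
  tau : Neg →+ H →+ Pos

attribute [instance] HPair.negGrp HPair.posGrp

variable {H : Type} [AddCommGroup H]

/-- An `H`-map of `H`-pairs. -/
structure HPairHom (M N : HPair H) where
  neg : M.Neg →+ N.Neg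
  pos : M.Pos →+ N.Pos
  comm : ∀ x h, pos (M.tau x h) = N.tau (neg x) h

/-- An isomorphism of `H`-pairs. -/
structure HPairIso (M N : HPair H) where
  toHom : HPairHom M N
  invHom : HPairHom N M
  left_neg : ∀ x, invHom.neg (toHom.neg x) = x
  right_neg : ∀ x, toHom.neg (invHom.neg x) = x
  left_pos : ∀ y, invHom.pos (toHom.pos y) = y
  right_pos : ∀ y, toHom.pos (invHom.pos y) = y

/-- An `H`-pair is finitely generated if both component groups are. -/
def HPair.FG (M : HPair H) : Prop :=
  AddGroup.FG M.Neg ∧ AddGroup.FG M.Pos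

/-- The componentwise direct sum of two `H`-pairs. -/
@[reducible] def HPair.sum (M N : HPair H) : HPair H where
  Neg := M.Neg × N.Neg
  Pos := M.Pos × N.Pos
  tau :=
    { toFun := fun x => (M.tau x.1).prod (N.tau x.2)
      map_zero' := by
        refine AddMonoidHom.ext fun h => ?_
        simp [Prod.ext_iff]
      map_add' := by
        intro x y
        refine AddMonoidHom.ext fun h => ?_
        simp [Prod.ext_iff] }

/-- The left inclusion `M → M ⊕ N`. -/
def HPairHom.inl (M N : HPair H) : HPairHom M (M.sum N) where
  neg := AddMonoidHom.inl M.Neg N.Neg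
  pos := AddMonoidHom.inl M.Pos N.Pos
  comm := by
    intro x h
    simp [HPair.sum, Prod.ext_iff]

/-- The right inclusion `N → M ⊕ N`. -/
def HPairHom.inr (M N : HPair H) : HPairHom N (M.sum N) where
  neg := AddMonoidHom.inr M.Neg N.Neg
  pos := AddMonoidHom.inr M.Pos N.Pos
  comm := by
    intro x h
    simp [HPair.sum, Prod.ext_iff]

/-- The `H`-pair `P⁰`, with `P⁰₋ = 0`, `P⁰₊ = ℤ` and `τ = 0`. -/
def P0 (H : Type) [AddCommGroup H] : HPair H where
  Neg := PUnit
  Pos := ℤ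
  tau := 0

/-- The `H`-pair `P¹`, with `P¹₋ = ℤ`, `P¹₊ = H` and `τ(t, h) = t • h`. -/
def P1 (H : Type) [AddCommGroup H] : HPair H where
  Neg := ℤ
  Pos := H
  tau := zmultiplesHom (H →+ H) (AddMonoidHom.id H)

/-- The generating-set length `d(H)`: the minimal `k` such that there is a
surjection `ℤ^k → H`. -/
noncomputable def dlen (H : Type) [AddCommGroup H] : ℕ :=
  sInf { k : ℕ | ∃ φ : (Fin k → ℤ) →+ H, Function.Surjective φ }

end HPairs

section WallForms

variable {H : Type} [AddCommGroup H]

/-- A form parameter `(G, ∂, π, ε)` for the category of `H`-pairs.  The two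
compatibility identities `bd_eps` and `pi_bd` hold in the geometric setting of
the paper and are needed for the standard Wall forms to exist. -/
structure FormParameter (H : Type) [AddCommGroup H] where
  G : HPair H
  bd : H →+ G.Pos
  pi : G.Pos →+ H
  eps : ℤ
  eps_pm : eps = 1 ∨ eps = -1
  bd_eps : ∀ h : H, bd (eps • h) = bd h
  pi_bd : ∀ h : H, pi (bd h) = h + eps • h

variable {P : FormParameter H}

/-- A Wall form structure (with parameter `P`) on the `H`-pair `C`. -/
structure WallAux (P : FormParameter H) (C : HPair H) where
  lam : C.Neg →+ C.Pos →+ ℤ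
  mu : C.Pos →+ C.Pos →+ H
  alphaNeg : C.Neg →+ P.G.Neg
  alphaPos : C.Pos → P.G.Pos
  mu_symm : ∀ y y', mu y y' = P.eps • mu y' y
  lam_tau : ∀ x x' h, lam x (C.tau x' h) = 0
  mu_tau : ∀ x h y, mu (C.tau x h) y = lam x y • h
  alphaPos_add : ∀ y y', alphaPos (y + y') = alphaPos y + alphaPos y' + P.bd (mu y y')
  mu_diag : ∀ y, mu y y = P.pi (alphaPos y)
  alphaPos_tau : ∀ x h, alphaPos (C.tau x h) = P.G.tau (alphaNeg x) h

/-- A Wall form with parameter `P`: a finitely generated `H`-pair together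
with a Wall form structure. -/
structure WallForm (P : FormParameter H) where
  carrier : HPair H
  fgNeg : AddGroup.FG carrier.Neg
  fgPos : AddGroup.FG carrier.Pos
  str : WallAux P carrier

/-- The property of an `H`-map to preserve all values of `λ`, `μ`, `α₋`, `α₊`. -/
def IsWallHom {C D : HPair H} (S : WallAux P C) (T : WallAux P D)
    (f : HPairHom C D) : Prop :=
  (∀ x y, T.lam (f.neg x) (f.pos y) = S.lam x y) ∧
  (∀ y y', T.mu (f.pos y) (f.pos y') = S.mu y y') ∧
  (∀ x, T.alphaNeg (f.neg x) = S.alphaNeg x) ∧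
  (∀ y, T.alphaPos (f.pos y) = S.alphaPos y)

/-- A morphism of Wall forms. -/
structure WallHom (M N : WallForm P) where
  hom : HPairHom M.carrier N.carrier
  isWall : IsWallHom M.str N.str hom

/-- An isomorphism of Wall forms: a morphism with a two-sided inverse morphism. -/
structure WallIso (M N : WallForm P) where
  toHom : WallHom M N
  invHom : WallHom N M
  left_neg : ∀ x, invHom.hom.neg (toHom.hom.neg x) = x
  right_neg : ∀ x, toHom.hom.neg (invHom.hom.neg x) = x
  left_pos : ∀ y, invHom.hom.pos (toHom.hom.pos y) = y
  right_pos : ∀ y, toHom.hom.pos (invHom.hom.pos y) = y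

end WallForms
section Extra

variable {H : Type} [AddCommGroup H] {P : FormParameter H}

/-- A subgroup of a finitely generated abelian group is finitely generated. -/
theorem addGroup_fg_subgroup {A : Type} [AddCommGroup A] (hA : AddGroup.FG A)
    (S : AddSubgroup A) : AddGroup.FG S := by
  haveI : Module.Finite ℤ A := Module.Finite.iff_addGroup_fg.mpr hA
  haveI : IsNoetherian ℤ A := isNoetherian_of_isNoetherianRing_of_finite ℤ A
  have h : (AddSubgroup.toIntSubmodule S).FG := IsNoetherian.noetherian _
  have h2 : Module.Finite ℤ (AddSubgroup.toIntSubmodule S) := Module.Finite.iff_fg.mpr h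
  exact Module.Finite.iff_addGroup_fg.mp h2

theorem addGroup_fg_of_module_finite {A : Type} [AddCommGroup A]
    [Module.Finite ℤ A] : AddGroup.FG A :=
  Module.Finite.iff_addGroup_fg.mp inferInstance

end Extra

section StdWall

variable {H : Type} [AddCommGroup H]

/-- The underlying `H`-pair of the standard Wall form of rank `g`:
`W^g₋ = ℤ^g` and `W^g₊ = ℤ^g × H^g`  (the first factor records the
`b`-coordinates, the second the `τ(a_i, -)`-coordinates). -/
@[reducible] def stdPair (H : Type) [AddCommGroup H] (g : ℕ) : HPair H where
  Neg := Fin g → ℤ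
  Pos := (Fin g → ℤ) × (Fin g → H)
  tau :=
    { toFun := fun x =>
        { toFun := fun h => (0, fun i => x i • h)
          map_zero' := by
            refine Prod.ext rfl ?_
            funext i
            simp
          map_add' := by
            intro h h'
            refine Prod.ext (by simp) ?_
            funext i
            simp [smul_add] }
      map_zero' := by
        refine AddMonoidHom.ext fun h => ?_
        refine Prod.ext rfl ?_
        funext i
        simp
      map_add' := by
        intro x x'
        refine AddMonoidHom.ext fun h => ?_
        refine Prod.ext (by simp) ?_
        funext i
        simp [add_smul] }

variable (P : FormParameter H)

/-- The standard Wall form `W^g` of rank `g` with parameter `P`. -/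
def stdWall [AddGroup.FG H] (g : ℕ) : WallForm P where
  carrier := stdPair H g
  fgNeg := by
    have : Module.Finite ℤ (Fin g → ℤ) := inferInstance
    exact addGroup_fg_of_module_finite
  fgPos := by
    haveI : Module.Finite ℤ H := Module.Finite.iff_addGroup_fg.mpr ‹AddGroup.FG H›
    have : Module.Finite ℤ ((Fin g → ℤ) × (Fin g → H)) := inferInstance
    exact addGroup_fg_of_module_finite
  str :=
    { lam :=
        { toFun := fun x =>
            { toFun := fun w => ∑ i, x i * w.1 i
              map_zero' := by simp
              map_add' := by
                intro w w'
                simp [mul_add, Finset.sum_add_distrib] }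
          map_zero' := by
            refine AddMonoidHom.ext fun w => ?_
            show (∑ i, (0 : Fin g → ℤ) i * w.1 i) = 0
            simp
          map_add' := by
            intro x x'
            refine AddMonoidHom.ext fun w => ?_
            simp [add_mul, Finset.sum_add_distrib] }
      mu :=
        { toFun := fun w =>
            { toFun := fun w' => (∑ i, w'.1 i • w.2 i) + P.eps • ∑ i, w.1 i • w'.2 i
              map_zero' := by simp
              map_add' := by
                intro w' w''
                simp only [Prod.fst_add, Prod.snd_add, Pi.add_apply, add_smul, smul_add,
                  Finset.sum_add_distrib]
                abel }
          map_zero' := by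
            refine AddMonoidHom.ext fun w' => ?_
            simp
          map_add' := by
            intro w w'
            refine AddMonoidHom.ext fun w'' => ?_
            simp only [Prod.fst_add, Prod.snd_add, Pi.add_apply, add_smul, smul_add,
              Finset.sum_add_distrib, AddMonoidHom.coe_mk, ZeroHom.coe_mk,
              AddMonoidHom.add_apply]
            abel }
      alphaNeg := 0
      alphaPos := fun w => P.bd (∑ i, w.1 i • w.2 i)
      mu_symm := by
        intro y y'
        have he : P.eps * P.eps = 1 := by
          rcases P.eps_pm with h | h <;> simp [h]
        show (∑ i, y'.1 i • y.2 i) + P.eps • ∑ i, y.1 i • y'.2 i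
            = P.eps • ((∑ i, y.1 i • y'.2 i) + P.eps • ∑ i, y'.1 i • y.2 i)
        rw [smul_add, smul_smul, he, one_smul, add_comm]
      lam_tau := by
        intro x x' h
        show (∑ i, x i * (0 : Fin _ → ℤ) i) = 0
        simp
      mu_tau := by
        intro x h y
        show (∑ i, y.1 i • (fun i => x i • h) i) + P.eps • ∑ i, (0 : Fin _ → ℤ) i • y.2 i
            = (∑ i, x i * y.1 i) • h
        simp only [Pi.zero_apply, zero_smul, Finset.sum_const_zero, smul_zero, add_zero]
        rw [Finset.sum_smul]
        congr 1
        funext i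
        rw [smul_smul, mul_comm]
      alphaPos_add := by
        intro y y'
        show P.bd (∑ i, (y.1 i + y'.1 i) • (y.2 i + y'.2 i))
            = P.bd (∑ i, y.1 i • y.2 i) + P.bd (∑ i, y'.1 i • y'.2 i)
              + P.bd ((∑ i, y'.1 i • y.2 i) + P.eps • ∑ i, y.1 i • y'.2 i)
        have expand : ∀ i : Fin _, (y.1 i + y'.1 i) • (y.2 i + y'.2 i)
            = (y.1 i • y.2 i + y'.1 i • y'.2 i) + (y'.1 i • y.2 i + y.1 i • y'.2 i) := by
          intro i
          rw [add_smul, smul_add, smul_add]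
          abel
        rw [Finset.sum_congr rfl fun i _ => expand i, Finset.sum_add_distrib,
          Finset.sum_add_distrib, Finset.sum_add_distrib, map_add, map_add, map_add, map_add,
          P.bd_eps]
      mu_diag := by
        intro y
        show (∑ i, y.1 i • y.2 i) + P.eps • ∑ i, y.1 i • y.2 i
            = P.pi (P.bd (∑ i, y.1 i • y.2 i))
        rw [P.pi_bd]
      alphaPos_tau := by
        intro x h
        show P.bd (∑ i, (0 : Fin _ → ℤ) i • (fun i => x i • h) i) = P.G.tau ((0 : _ →+ _) x) h
        simp }

variable {P}

/-- The `i`-th standard generator `a_i ∈ W^g₋`. -/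
def stdA [AddGroup.FG H] {g : ℕ} (i : Fin g) : (stdWall P g).carrier.Neg :=
  Pi.single i 1

/-- The `i`-th standard generator `b_i ∈ W^g₊`. -/
def stdB [AddGroup.FG H] {g : ℕ} (i : Fin g) : (stdWall P g).carrier.Pos :=
  (Pi.single i 1, 0)

end StdWall
section SubPairs

variable {H : Type} [AddCommGroup H] {P : FormParameter H}

/-- A sub-`H`-pair of the `H`-pair `C`. -/
structure SubPair (C : HPair H) where
  neg : AddSubgroup C.Neg
  pos : AddSubgroup C.Pos
  tau_mem : ∀ x ∈ neg, ∀ h, C.tau x h ∈ pos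

/-- The componentwise intersection of two sub-`H`-pairs. -/
def SubPair.inf {C : HPair H} (N N' : SubPair C) : SubPair C where
  neg := N.neg ⊓ N'.neg
  pos := N.pos ⊓ N'.pos
  tau_mem := fun x hx h => ⟨N.tau_mem x hx.1 h, N'.tau_mem x hx.2 h⟩

/-- The image of an `H`-map, as a sub-`H`-pair of the codomain. -/
def HPairHom.rangeSub {C D : HPair H} (f : HPairHom C D) : SubPair D where
  neg := f.neg.range
  pos := f.pos.range
  tau_mem := by
    rintro x ⟨a, rfl⟩ h
    exact ⟨C.tau a h, f.comm a h⟩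

/-- The kernel of an `H`-map, as a sub-`H`-pair of the domain. -/
def HPairHom.kerSub {C D : HPair H} (f : HPairHom C D) : SubPair C where
  neg := f.neg.ker
  pos := f.pos.ker
  tau_mem := by
    intro x hx h
    have hx' : f.neg x = 0 := hx
    have h2 : f.pos (C.tau x h) = D.tau (f.neg x) h := f.comm x h
    rw [hx'] at h2
    have h3 : f.pos (C.tau x h) = 0 := by
      rw [h2, map_zero, AddMonoidHom.zero_apply]
    exact h3

/-- The orthogonal complement of a sub-`H`-pair, with respect to a Wall form
structure `S` on the ambient `H`-pair. -/
def SubPair.perp {C : HPair H} (S : WallAux P C) (N : SubPair C) : SubPair C where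
  neg :=
    { carrier := { x | ∀ w ∈ N.pos, S.lam x w = 0 }
      add_mem' := by
        intro a b ha hb w hw
        rw [map_add, AddMonoidHom.add_apply, ha w hw, hb w hw, add_zero]
      zero_mem' := by
        intro w hw
        rw [map_zero, AddMonoidHom.zero_apply]
      neg_mem' := by
        intro a ha w hw
        rw [map_neg, AddMonoidHom.neg_apply, ha w hw, neg_zero] }
  pos :=
    { carrier := { y | (∀ v ∈ N.neg, S.lam v y = 0) ∧ ∀ w ∈ N.pos, S.mu y w = 0 }
      add_mem' := by
        intro a b ha hb
        refine ⟨fun v hv => ?_, fun w hw => ?_⟩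
        · rw [map_add, ha.1 v hv, hb.1 v hv, add_zero]
        · rw [map_add, AddMonoidHom.add_apply, ha.2 w hw, hb.2 w hw, add_zero]
      zero_mem' := by
        refine ⟨fun v hv => ?_, fun w hw => ?_⟩
        · rw [map_zero]
        · rw [map_zero, AddMonoidHom.zero_apply]
      neg_mem' := by
        intro a ha
        refine ⟨fun v hv => ?_, fun w hw => ?_⟩
        · rw [map_neg, ha.1 v hv, neg_zero]
        · rw [map_neg, AddMonoidHom.neg_apply, ha.2 w hw, neg_zero] }
  tau_mem := by
    intro x hx h
    refine ⟨fun v hv => S.lam_tau v x h, fun w hw => ?_⟩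
    rw [S.mu_tau x h w, hx w hw, zero_smul]

/-- Orthogonality of two sub-`H`-pairs with respect to a Wall form structure
`S`: trivial intersection and mutual containment in orthogonal complements. -/
def OrthogonalIn {C : HPair H} (S : WallAux P C) (N N' : SubPair C) : Prop :=
  N.neg ⊓ N'.neg = ⊥ ∧ N.pos ⊓ N'.pos = ⊥ ∧
  N.neg ≤ (N'.perp S).neg ∧ N.pos ≤ (N'.perp S).pos ∧
  N'.neg ≤ (N.perp S).neg ∧ N'.pos ≤ (N.perp S).pos

/-- The underlying `H`-pair of a sub-`H`-pair. -/
@[reducible] def SubPair.toPair {C : HPair H} (N : SubPair C) : HPair H where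
  Neg := N.neg
  Pos := N.pos
  tau :=
    { toFun := fun x =>
        { toFun := fun h => ⟨C.tau x h, N.tau_mem x x.2 h⟩
          map_zero' := by
            apply Subtype.ext
            simp
          map_add' := by
            intro h h'
            apply Subtype.ext
            simp }
      map_zero' := by
        refine AddMonoidHom.ext fun h => ?_
        apply Subtype.ext
        simp
      map_add' := by
        intro x x'
        refine AddMonoidHom.ext fun h => ?_
        apply Subtype.ext
        simp }

/-- The restriction of a Wall form structure to a sub-`H`-pair. -/
def SubPair.restrict {C : HPair H} (S : WallAux P C) (N : SubPair C) :
    WallAux P N.toPair where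
  lam :=
    { toFun := fun x => (S.lam (x : C.Neg)).comp N.pos.subtype
      map_zero' := by
        refine AddMonoidHom.ext fun y => ?_
        simp
      map_add' := by
        intro x x'
        refine AddMonoidHom.ext fun y => ?_
        simp }
  mu :=
    { toFun := fun y => (S.mu (y : C.Pos)).comp N.pos.subtype
      map_zero' := by
        refine AddMonoidHom.ext fun y => ?_
        simp
      map_add' := by
        intro y y'
        refine AddMonoidHom.ext fun y'' => ?_
        simp }
  alphaNeg := S.alphaNeg.comp N.neg.subtype
  alphaPos := fun y => S.alphaPos (y : C.Pos)
  mu_symm := fun y y' => S.mu_symm (y : C.Pos) y'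
  lam_tau := fun x x' h => S.lam_tau (x : C.Neg) x' h
  mu_tau := fun x h y => S.mu_tau (x : C.Neg) h y
  alphaPos_add := fun y y' => S.alphaPos_add (y : C.Pos) y'
  mu_diag := fun y => S.mu_diag (y : C.Pos)
  alphaPos_tau := fun x h => S.alphaPos_tau (x : C.Neg) h

/-- A sub-`H`-pair of (the carrier of) a Wall form is itself a Wall form, via
the restricted structure maps. -/
def SubPair.toWall {M : WallForm P} (N : SubPair M.carrier) : WallForm P where
  carrier := N.toPair
  fgNeg := addGroup_fg_subgroup M.fgNeg N.neg
  fgPos := addGroup_fg_subgroup M.fgPos N.pos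
  str := N.restrict M.str

end SubPairs
section SumAndRank

variable {H : Type} [AddCommGroup H] {P : FormParameter H}

/-- The orthogonal direct sum of two Wall forms. -/
def WallForm.sum (M N : WallForm P) : WallForm P where
  carrier := M.carrier.sum N.carrier
  fgNeg := by
    haveI : Module.Finite ℤ M.carrier.Neg := Module.Finite.iff_addGroup_fg.mpr M.fgNeg
    haveI : Module.Finite ℤ N.carrier.Neg := Module.Finite.iff_addGroup_fg.mpr N.fgNeg
    have : Module.Finite ℤ (M.carrier.Neg × N.carrier.Neg) := inferInstance
    exact Module.Finite.iff_addGroup_fg.mp this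
  fgPos := by
    haveI : Module.Finite ℤ M.carrier.Pos := Module.Finite.iff_addGroup_fg.mpr M.fgPos
    haveI : Module.Finite ℤ N.carrier.Pos := Module.Finite.iff_addGroup_fg.mpr N.fgPos
    have : Module.Finite ℤ (M.carrier.Pos × N.carrier.Pos) := inferInstance
    exact Module.Finite.iff_addGroup_fg.mp this
  str :=
    { lam :=
        { toFun := fun x => (M.str.lam x.1).coprod (N.str.lam x.2)
          map_zero' := by
            refine AddMonoidHom.ext fun y => ?_
            simp
          map_add' := by
            intro x x'
            refine AddMonoidHom.ext fun y => ?_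
            simp
            abel }
      mu :=
        { toFun := fun y => (M.str.mu y.1).coprod (N.str.mu y.2)
          map_zero' := by
            refine AddMonoidHom.ext fun y' => ?_
            simp
          map_add' := by
            intro y y'
            refine AddMonoidHom.ext fun y'' => ?_
            simp
            abel }
      alphaNeg := (M.str.alphaNeg).coprod (N.str.alphaNeg)
      alphaPos := fun y => M.str.alphaPos y.1 + N.str.alphaPos y.2
      mu_symm := by
        intro y y'
        show M.str.mu y.1 y'.1 + N.str.mu y.2 y'.2
            = P.eps • (M.str.mu y'.1 y.1 + N.str.mu y'.2 y.2)
        rw [smul_add, M.str.mu_symm y.1 y'.1, N.str.mu_symm y.2 y'.2]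
      lam_tau := by
        intro x x' h
        show M.str.lam x.1 (M.carrier.tau x'.1 h) + N.str.lam x.2 (N.carrier.tau x'.2 h) = 0
        rw [M.str.lam_tau, N.str.lam_tau, add_zero]
      mu_tau := by
        intro x h y
        show M.str.mu (M.carrier.tau x.1 h) y.1 + N.str.mu (N.carrier.tau x.2 h) y.2
            = (M.str.lam x.1 y.1 + N.str.lam x.2 y.2) • h
        rw [M.str.mu_tau, N.str.mu_tau, add_smul]
      alphaPos_add := by
        intro y y'
        show M.str.alphaPos (y.1 + y'.1) + N.str.alphaPos (y.2 + y'.2)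
            = (M.str.alphaPos y.1 + N.str.alphaPos y.2)
              + (M.str.alphaPos y'.1 + N.str.alphaPos y'.2)
              + P.bd (M.str.mu y.1 y'.1 + N.str.mu y.2 y'.2)
        rw [M.str.alphaPos_add, N.str.alphaPos_add, map_add]
        abel
      mu_diag := by
        intro y
        show M.str.mu y.1 y.1 + N.str.mu y.2 y.2
            = P.pi (M.str.alphaPos y.1 + N.str.alphaPos y.2)
        rw [map_add, M.str.mu_diag, N.str.mu_diag]
      alphaPos_tau := by
        intro x h
        show M.str.alphaPos (M.carrier.tau x.1 h) + N.str.alphaPos (N.carrier.tau x.2 h)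
            = P.G.tau (M.str.alphaNeg x.1 + N.str.alphaNeg x.2) h
        rw [M.str.alphaPos_tau, N.str.alphaPos_tau, map_add, AddMonoidHom.add_apply] }

variable [AddGroup.FG H]

/-- `rankGE M g` expresses the inequality `r(M) ≥ g` for the rank of a Wall
form: there exists a morphism of Wall forms `W^g → M`. -/
def rankGE (M : WallForm P) (g : ℕ) : Prop :=
  Nonempty (WallHom (stdWall P g) M)

/-- `srankGE M g` expresses the inequality `r̄(M) ≥ g` for the stable rank of
a Wall form: `r(M ⊕ W^j) ≥ g + j` for some `j`. -/
def srankGE (M : WallForm P) (g : ℕ) : Prop :=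
  ∃ j : ℕ, rankGE (M.sum (stdWall P j)) (g + j)

end SumAndRank

section Duality

variable {H : Type} [AddCommGroup H] {P : FormParameter H}

/-- The duality map `T⁰ : M₋ → Hom(M, P⁰)` of a Wall form. -/
def dualT0 (M : WallForm P) (v : M.carrier.Neg) : HPairHom M.carrier (P0 H) where
  neg := 0
  pos := M.str.lam v
  comm := by
    intro x h
    show M.str.lam v (M.carrier.tau x h) = ((P0 H).tau 0) h
    rw [M.str.lam_tau]
    show (0 : ℤ) = ((0 : _ →+ (H →+ ℤ)) 0) h
    rfl

/-- The duality map `T¹ : M₊ → Hom(M, P¹)` of a Wall form. -/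
def dualT1 (M : WallForm P) (w : M.carrier.Pos) : HPairHom M.carrier (P1 H) where
  neg := M.str.lam.flip w
  pos := M.str.mu.flip w
  comm := by
    intro x h
    show M.str.mu (M.carrier.tau x h) w = (P1 H).tau (M.str.lam x w) h
    rw [M.str.mu_tau]
    show M.str.lam x w • h = (M.str.lam x w • AddMonoidHom.id H) h
    simp

end Duality

section Statement3Aux

variable {H : Type} [AddCommGroup H] [AddGroup.FG H] {P : FormParameter H}

/-- The standard generator `a ∈ W₋` of the rank-one standard Wall form. -/
def aW : (stdWall P 1).carrier.Neg := fun _ => 1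

/-- The standard generator `b ∈ W₊` of the rank-one standard Wall form. -/
def bW : (stdWall P 1).carrier.Pos := ((fun _ => 1), 0)

lemma std1_lam (x : (stdWall P 1).carrier.Neg) (w : (stdWall P 1).carrier.Pos) :
    (stdWall P 1).str.lam x w = x 0 * w.1 0 := by
  show (∑ i, x i * w.1 i) = _
  simp

lemma std1_mu (y w : (stdWall P 1).carrier.Pos) :
    (stdWall P 1).str.mu y w = w.1 0 • y.2 0 + P.eps • (y.1 0 • w.2 0) := by
  show ((∑ i, w.1 i • y.2 i) + P.eps • ∑ i, y.1 i • w.2 i) = _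
  simp

lemma std1_tau (x : (stdWall P 1).carrier.Neg) (h : H) :
    (stdWall P 1).carrier.tau x h = (0, fun i => x i • h) := rfl

lemma Wneg_smul_apply (c : ℤ) (x : (stdWall P 1).carrier.Neg) (i : Fin 1) :
    (c • x) i = c * x i := rfl

lemma Wpos_smul_fst (c : ℤ) (p : (stdWall P 1).carrier.Pos) (i : Fin 1) :
    (c • p).1 i = c * p.1 i := rfl

lemma Wpos_smul_snd (c : ℤ) (p : (stdWall P 1).carrier.Pos) (i : Fin 1) :
    (c • p).2 i = c • p.2 i := rfl

lemma std1_neg_eq (x : (stdWall P 1).carrier.Neg) : x = x 0 • (aW (P := P)) := by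
  funext i
  have h : i = 0 := Subsingleton.elim i 0
  subst h
  rw [Wneg_smul_apply]
  simp [aW]

lemma std1_pos_eq (y : (stdWall P 1).carrier.Pos) :
    y = y.1 0 • (bW (P := P)) + (stdWall P 1).carrier.tau aW (y.2 0) := by
  rw [std1_tau]
  refine Prod.ext ?_ ?_
  · funext i
    have h : i = 0 := Subsingleton.elim i 0
    subst h
    change y.1 0 = y.1 0 * (bW (P := P)).1 0 + (0 : Fin 1 → ℤ) 0
    simp [bW]
  · funext i
    have h : i = 0 := Subsingleton.elim i 0
    subst h
    change y.2 0 = y.1 0 • (bW (P := P)).2 0 + aW (P := P) 0 • y.2 0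
    simp [bW, aW]

variable (M : WallForm P) (f : WallHom (stdWall P 1) M)

lemma lam_AB : M.str.lam (f.hom.neg aW) (f.hom.pos bW) = 1 := by
  rw [f.isWall.1, std1_lam]
  simp [aW, bW]

lemma mu_BB : M.str.mu (f.hom.pos bW) (f.hom.pos bW) = 0 := by
  rw [f.isWall.2.1, std1_mu]
  simp [bW]

lemma fneg_eq (x : (stdWall P 1).carrier.Neg) :
    f.hom.neg x = x 0 • f.hom.neg aW := by
  conv_lhs => rw [std1_neg_eq x]
  rw [map_zsmul]

lemma fpos_eq (y : (stdWall P 1).carrier.Pos) :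
    f.hom.pos y = y.1 0 • f.hom.pos bW
      + M.carrier.tau (f.hom.neg aW) (y.2 0) := by
  conv_lhs => rw [std1_pos_eq y]
  rw [map_add, map_zsmul, f.hom.comm]

lemma lam_A_fpos (y : (stdWall P 1).carrier.Pos) :
    M.str.lam (f.hom.neg aW) (f.hom.pos y) = y.1 0 := by
  rw [f.isWall.1, std1_lam]
  simp [aW]

lemma mu_fpos_B (y : (stdWall P 1).carrier.Pos) :
    M.str.mu (f.hom.pos y) (f.hom.pos bW) = y.2 0 := by
  rw [f.isWall.2.1, std1_mu]
  simp [bW]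

lemma mem_range_neg {v : M.carrier.Neg} (hv : v ∈ f.hom.neg.range) :
    ∃ c : ℤ, v = c • f.hom.neg aW := by
  obtain ⟨x, rfl⟩ := hv
  exact ⟨x 0, fneg_eq M f x⟩

lemma mem_range_pos {w : M.carrier.Pos} (hw : w ∈ f.hom.pos.range) :
    ∃ (c : ℤ) (h : H), w = c • f.hom.pos bW
      + M.carrier.tau (f.hom.neg aW) h := by
  obtain ⟨y, rfl⟩ := hw
  exact ⟨y.1 0, y.2 0, fpos_eq M f y⟩

lemma lam_vs_range (x : M.carrier.Neg) (c : ℤ) (h : H) :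
    M.str.lam x (c • f.hom.pos bW + M.carrier.tau (f.hom.neg aW) h)
      = c * M.str.lam x (f.hom.pos bW) := by
  rw [map_add, map_zsmul, M.str.lam_tau, add_zero, smul_eq_mul]

lemma mu_vs_range (y : M.carrier.Pos) (c : ℤ) (h : H)
    (hy : M.str.lam (f.hom.neg aW) y = 0) :
    M.str.mu y (c • f.hom.pos bW + M.carrier.tau (f.hom.neg aW) h)
      = c • M.str.mu y (f.hom.pos bW) := by
  rw [map_add, map_zsmul,
    M.str.mu_symm y (M.carrier.tau (f.hom.neg aW) h), M.str.mu_tau, hy,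
    zero_smul, smul_zero, add_zero]

lemma lam_smul_left (c : ℤ) (x : M.carrier.Neg) (w : M.carrier.Pos) :
    M.str.lam (c • x) w = c • M.str.lam x w :=
  map_zsmul (M.str.lam.flip w) c x

lemma mu_smul_left (c : ℤ) (y w : M.carrier.Pos) :
    M.str.mu (c • y) w = c • M.str.mu y w :=
  map_zsmul (M.str.mu.flip w) c y

lemma lam_sub_left (x x' : M.carrier.Neg) (w : M.carrier.Pos) :
    M.str.lam (x - x') w = M.str.lam x w - M.str.lam x' w :=
  map_sub (M.str.lam.flip w) x x'

lemma mu_sub_left (y y' w : M.carrier.Pos) :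
    M.str.mu (y - y') w = M.str.mu y w - M.str.mu y' w :=
  map_sub (M.str.mu.flip w) y y'

lemma lam_add_left (x x' : M.carrier.Neg) (w : M.carrier.Pos) :
    M.str.lam (x + x') w = M.str.lam x w + M.str.lam x' w :=
  map_add (M.str.lam.flip w) x x'

lemma mu_add_left (y y' w : M.carrier.Pos) :
    M.str.mu (y + y') w = M.str.mu y w + M.str.mu y' w :=
  map_add (M.str.mu.flip w) y y'

/-- The retraction `M → W` associated to a morphism `f : W → M`. -/
def retr : HPairHom M.carrier (stdWall P 1).carrier where
  neg :=
    { toFun := fun x => fun _ => M.str.lam x (f.hom.pos bW)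
      map_zero' := by
        funext i
        show M.str.lam 0 (f.hom.pos bW) = (0 : Fin 1 → ℤ) i
        rw [map_zero, AddMonoidHom.zero_apply]
        rfl
      map_add' := by
        intro x x'
        funext i
        show M.str.lam (x + x') (f.hom.pos bW) = _
        rw [map_add, AddMonoidHom.add_apply]
        rfl }
  pos :=
    { toFun := fun y =>
        ((fun _ => M.str.lam (f.hom.neg aW) y), fun _ => M.str.mu y (f.hom.pos bW))
      map_zero' := by
        refine Prod.ext ?_ ?_ <;> funext i
        · show M.str.lam (f.hom.neg aW) 0 = (0 : Fin 1 → ℤ) i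
          rw [map_zero]
          rfl
        · show M.str.mu 0 (f.hom.pos bW) = (0 : Fin 1 → H) i
          rw [map_zero, AddMonoidHom.zero_apply]
          rfl
      map_add' := by
        intro y y'
        refine Prod.ext ?_ ?_ <;> funext i
        · show M.str.lam (f.hom.neg aW) (y + y') = _
          rw [map_add]
          rfl
        · show M.str.mu (y + y') (f.hom.pos bW) = _
          rw [map_add, AddMonoidHom.add_apply]
          rfl }
  comm := by
    intro x h
    refine Prod.ext ?_ ?_
    · funext i
      show M.str.lam (f.hom.neg aW) (M.carrier.tau x h) = _
      rw [M.str.lam_tau]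
      rfl
    · funext i
      show M.str.mu (M.carrier.tau x h) (f.hom.pos bW) = _
      rw [M.str.mu_tau]
      rfl

end Statement3Aux

/-- A morphism `f : W → M` of Wall forms is split-injective,
and `M` decomposes as the orthogonal direct sum of the image of `f` and its
orthogonal complement. -/
theorem statement_3 {H : Type} [AddCommGroup H] [AddGroup.FG H]
    (P : FormParameter H) (M : WallForm P) (f : WallHom (stdWall P 1) M) :
    Function.Injective f.hom.neg ∧ Function.Injective f.hom.pos ∧
    (∃ r : HPairHom M.carrier (stdWall P 1).carrier,
      (∀ x, r.neg (f.hom.neg x) = x) ∧ ∀ y, r.pos (f.hom.pos y) = y) ∧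
    OrthogonalIn M.str f.hom.rangeSub (f.hom.rangeSub.perp M.str) ∧
    f.hom.rangeSub.neg ⊔ (f.hom.rangeSub.perp M.str).neg = ⊤ ∧
    f.hom.rangeSub.pos ⊔ (f.hom.rangeSub.perp M.str).pos = ⊤ := by
  have hAB := lam_AB M f
  have hBB := mu_BB M f
  have hA_mem : f.hom.neg aW ∈ f.hom.rangeSub.neg := ⟨aW, rfl⟩
  have hB_mem : f.hom.pos bW ∈ f.hom.rangeSub.pos := ⟨bW, rfl⟩
  have hτ_mem : ∀ h : H,
      M.carrier.tau (f.hom.neg aW) h ∈ f.hom.rangeSub.pos := fun h =>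
    ⟨(stdWall P 1).carrier.tau aW h, f.hom.comm aW h⟩
  -- retraction identities
  have hrn : ∀ x, (retr M f).neg (f.hom.neg x) = x := by
    intro x
    funext i
    have h : i = 0 := Subsingleton.elim i 0
    subst h
    show M.str.lam (f.hom.neg x) (f.hom.pos bW) = x 0
    rw [f.isWall.1, std1_lam]
    simp [bW]
  have hrp : ∀ y, (retr M f).pos (f.hom.pos y) = y := by
    intro y
    refine Prod.ext ?_ ?_ <;> funext i <;>
      · have h : i = 0 := Subsingleton.elim i 0
        subst h
        first
          | exact lam_A_fpos M f y
          | exact mu_fpos_B M f y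
  have injNeg : Function.Injective f.hom.neg :=
    Function.LeftInverse.injective hrn
  have injPos : Function.Injective f.hom.pos :=
    Function.LeftInverse.injective hrp
  -- membership in the orthogonal complement of the range, convenient forms
  have perpNeg_iff : ∀ v : M.carrier.Neg,
      v ∈ (f.hom.rangeSub.perp M.str).neg ↔
        ∀ w ∈ f.hom.rangeSub.pos, M.str.lam v w = 0 := fun _ => Iff.rfl
  have perpPos_iff : ∀ w : M.carrier.Pos,
      w ∈ (f.hom.rangeSub.perp M.str).pos ↔
        (∀ v ∈ f.hom.rangeSub.neg, M.str.lam v w = 0) ∧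
          ∀ u ∈ f.hom.rangeSub.pos, M.str.mu w u = 0 := fun _ => Iff.rfl
  refine ⟨injNeg, injPos, ⟨retr M f, hrn, hrp⟩, ⟨?_, ?_, ?_, ?_, le_refl _, le_refl _⟩, ?_, ?_⟩
  · -- neg intersection trivial
    rw [eq_bot_iff]
    rintro v ⟨hv1, hv2⟩
    obtain ⟨c, rfl⟩ := mem_range_neg M f hv1
    have h0 : M.str.lam (c • f.hom.neg aW) (f.hom.pos bW) = 0 :=
      (perpNeg_iff _).mp hv2 _ hB_mem
    rw [lam_smul_left, hAB, smul_eq_mul, mul_one] at h0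
    rw [AddSubgroup.mem_bot, h0, zero_smul]
  · -- pos intersection trivial
    rw [eq_bot_iff]
    rintro w ⟨hw1, hw2⟩
    obtain ⟨c, h, rfl⟩ := mem_range_pos M f hw1
    obtain ⟨hw2a, hw2b⟩ := (perpPos_iff _).mp hw2
    have h0 : c = 0 := by
      have := hw2a _ hA_mem
      rw [lam_vs_range, hAB, mul_one] at this
      exact this
    subst h0
    rw [zero_smul, zero_add] at hw2b ⊢
    have h1 : M.str.mu (M.carrier.tau (f.hom.neg aW) h) (f.hom.pos bW) = 0 :=
      hw2b _ hB_mem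
    rw [M.str.mu_tau, hAB, one_smul] at h1
    rw [AddSubgroup.mem_bot, h1, map_zero]
  · -- range.neg ≤ perp.perp.neg
    intro v hv
    obtain ⟨c, rfl⟩ := mem_range_neg M f hv
    intro w hw
    have hAw : M.str.lam (f.hom.neg aW) w = 0 :=
      ((perpPos_iff _).mp hw).1 _ hA_mem
    rw [lam_smul_left, hAw, smul_zero]
  · -- range.pos ≤ perp.perp.pos
    intro w hw
    refine ⟨fun v hv => (perpNeg_iff _).mp hv _ hw, fun u hu => ?_⟩
    have h0 : M.str.mu u w = 0 := ((perpPos_iff _).mp hu).2 _ hw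
    rw [M.str.mu_symm, h0, smul_zero]
  · -- negative parts span
    rw [eq_top_iff]
    intro x _
    have hx : x = (M.str.lam x (f.hom.pos bW)) • f.hom.neg aW
        + (x - (M.str.lam x (f.hom.pos bW)) • f.hom.neg aW) := by abel
    rw [hx]
    refine AddSubgroup.add_mem _
      (AddSubgroup.mem_sup_left (AddSubgroup.zsmul_mem _ hA_mem _))
      (AddSubgroup.mem_sup_right ?_)
    rw [perpNeg_iff]
    intro w hw
    obtain ⟨c, h, rfl⟩ := mem_range_pos M f hw
    rw [lam_vs_range, lam_sub_left, lam_smul_left, hAB, smul_eq_mul, mul_one,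
      sub_self, mul_zero]
  · -- positive parts span
    rw [eq_top_iff]
    intro y _
    set p : M.carrier.Pos := (M.str.lam (f.hom.neg aW) y) • f.hom.pos bW
        + M.carrier.tau (f.hom.neg aW) (M.str.mu y (f.hom.pos bW)) with hp
    have hy : y = p + (y - p) := by abel
    have hlamA0 : M.str.lam (f.hom.neg aW) (y - p) = 0 := by
      rw [map_sub, hp, lam_vs_range, hAB, mul_one, sub_self]
    have hmuB0 : M.str.mu (y - p) (f.hom.pos bW) = 0 := by
      rw [mu_sub_left, hp, mu_add_left, mu_smul_left, hBB, smul_zero,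
        M.str.mu_tau, hAB, one_smul, zero_add, sub_self]
    rw [hy]
    refine AddSubgroup.add_mem _
      (AddSubgroup.mem_sup_left
        (AddSubgroup.add_mem _ (AddSubgroup.zsmul_mem _ hB_mem _) (hτ_mem _)))
      (AddSubgroup.mem_sup_right ?_)
    rw [perpPos_iff]
    constructor
    · intro v hv
      obtain ⟨c, rfl⟩ := mem_range_neg M f hv
      rw [lam_smul_left, hlamA0, smul_zero]
    · intro u hu
      obtain ⟨c, h, rfl⟩ := mem_range_pos M f hu
      rw [mu_vs_range M f _ _ _ hlamA0, hmuB0, smul_zero]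
end

section
/- Let f : W^g → M be a morphism of Wall forms. Then the stable rank of the orthogonal complement of the image satisfies r̄(f(W^g)^⊥) ≥ r̄(M) − g. -/
/-! ### Auxiliary machinery for statement 5 -/

section Aux1

variable {H : Type} [AddCommGroup H] {P : FormParameter H}

lemma alphaPos_zero' {C : HPair H} (S : WallAux P C) : S.alphaPos 0 = 0 := by
  have h := S.alphaPos_add 0 0
  simp only [add_zero, map_zero, AddMonoidHom.zero_apply] at h
  have h' : S.alphaPos 0 + 0 = S.alphaPos 0 + S.alphaPos 0 := by
    rw [add_zero]; exact h
  exact (add_left_cancel h').symm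

/-- Composition of Wall form morphisms. -/
def WallHom.comp' {A B C : WallForm P} (f : WallHom A B) (g : WallHom B C) :
    WallHom A C where
  hom :=
    { neg := g.hom.neg.comp f.hom.neg
      pos := g.hom.pos.comp f.hom.pos
      comm := by
        intro x h
        simp only [AddMonoidHom.comp_apply, f.hom.comm, g.hom.comm] }
  isWall := by
    refine ⟨fun x y => ?_, fun y y' => ?_, fun x => ?_, fun y => ?_⟩ <;>
      simp only [AddMonoidHom.comp_apply, g.isWall.1, g.isWall.2.1, g.isWall.2.2.1,
        g.isWall.2.2.2, f.isWall.1, f.isWall.2.1, f.isWall.2.2.1, f.isWall.2.2.2]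

/-- The identity Wall form morphism. -/
def WallHom.id' (A : WallForm P) : WallHom A A where
  hom :=
    { neg := AddMonoidHom.id _
      pos := AddMonoidHom.id _
      comm := fun _ _ => rfl }
  isWall := ⟨fun _ _ => rfl, fun _ _ => rfl, fun _ => rfl, fun _ => rfl⟩

/-- The direct sum of two Wall form morphisms. -/
def WallHom.sumHom {A B C D : WallForm P} (f : WallHom A B) (g : WallHom C D) :
    WallHom (A.sum C) (B.sum D) where
  hom :=
    { neg := f.hom.neg.prodMap g.hom.neg
      pos := f.hom.pos.prodMap g.hom.pos
      comm := by
        intro x h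
        refine Prod.ext ?_ ?_
        · exact f.hom.comm x.1 h
        · exact g.hom.comm x.2 h }
  isWall := by
    refine ⟨fun x y => ?_, fun y y' => ?_, fun x => ?_, fun y => ?_⟩
    · show B.str.lam (f.hom.neg x.1) (f.hom.pos y.1)
          + D.str.lam (g.hom.neg x.2) (g.hom.pos y.2)
        = A.str.lam x.1 y.1 + C.str.lam x.2 y.2
      rw [f.isWall.1, g.isWall.1]
    · show B.str.mu (f.hom.pos y.1) (f.hom.pos y'.1)
          + D.str.mu (g.hom.pos y.2) (g.hom.pos y'.2)
        = A.str.mu y.1 y'.1 + C.str.mu y.2 y'.2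
      rw [f.isWall.2.1, g.isWall.2.1]
    · show B.str.alphaNeg (f.hom.neg x.1) + D.str.alphaNeg (g.hom.neg x.2)
        = A.str.alphaNeg x.1 + C.str.alphaNeg x.2
      rw [f.isWall.2.2.1, g.isWall.2.2.1]
    · show B.str.alphaPos (f.hom.pos y.1) + D.str.alphaPos (g.hom.pos y.2)
        = A.str.alphaPos y.1 + C.str.alphaPos y.2
      rw [f.isWall.2.2.2, g.isWall.2.2.2]

/-- The associativity morphism for direct sums of Wall forms. -/
def WallHom.assoc (A B C : WallForm P) : WallHom ((A.sum B).sum C) (A.sum (B.sum C)) where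
  hom :=
    { neg :=
        { toFun := fun x => (x.1.1, (x.1.2, x.2))
          map_zero' := rfl
          map_add' := fun _ _ => rfl }
      pos :=
        { toFun := fun y => (y.1.1, (y.1.2, y.2))
          map_zero' := rfl
          map_add' := fun _ _ => rfl }
      comm := fun _ _ => rfl }
  isWall := by
    refine ⟨fun x y => ?_, fun y y' => ?_, fun x => ?_, fun y => ?_⟩
    · show A.str.lam x.1.1 y.1.1 + (B.str.lam x.1.2 y.1.2 + C.str.lam x.2 y.2)
        = A.str.lam x.1.1 y.1.1 + B.str.lam x.1.2 y.1.2 + C.str.lam x.2 y.2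
      rw [add_assoc]
    · show A.str.mu y.1.1 y'.1.1 + (B.str.mu y.1.2 y'.1.2 + C.str.mu y.2 y'.2)
        = A.str.mu y.1.1 y'.1.1 + B.str.mu y.1.2 y'.1.2 + C.str.mu y.2 y'.2
      rw [add_assoc]
    · show A.str.alphaNeg x.1.1 + (B.str.alphaNeg x.1.2 + C.str.alphaNeg x.2)
        = A.str.alphaNeg x.1.1 + B.str.alphaNeg x.1.2 + C.str.alphaNeg x.2
      rw [add_assoc]
    · show A.str.alphaPos y.1.1 + (B.str.alphaPos y.1.2 + C.str.alphaPos y.2)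
        = A.str.alphaPos y.1.1 + B.str.alphaPos y.1.2 + C.str.alphaPos y.2
      rw [add_assoc]

variable [AddGroup.FG H]

/-- The (unique) Wall form morphism out of `W⁰`. -/
def WallHom.fromZero (X : WallForm P) : WallHom (stdWall P 0) X where
  hom :=
    { neg := 0
      pos := 0
      comm := by
        intro x h
        show (0 : X.carrier.Pos) = X.carrier.tau ((0 : _ →+ _) x) h
        simp }
  isWall := by
    refine ⟨fun x y => ?_, fun y y' => ?_, fun x => ?_, fun y => ?_⟩
    · show X.str.lam ((0 : _ →+ _) x) ((0 : _ →+ _) y) = ∑ i : Fin 0, x i * y.1 i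
      simp
    · show X.str.mu ((0 : _ →+ _) y) ((0 : _ →+ _) y')
        = (∑ i : Fin 0, y'.1 i • y.2 i) + P.eps • ∑ i : Fin 0, y.1 i • y'.2 i
      simp
    · show X.str.alphaNeg ((0 : _ →+ _) x) = (0 : _ →+ _) x
      simp
    · show X.str.alphaPos ((0 : _ →+ _) y) = P.bd (∑ i : Fin 0, y.1 i • y.2 i)
      simp [alphaPos_zero']

end Aux1

section Merge

/-- Merging two tuples along `finSumFinEquiv`. -/
def mergeFun {α : Type*} {g j : ℕ} (x : Fin g → α) (y : Fin j → α) : Fin (g + j) → α :=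
  fun i => Sum.elim x y (finSumFinEquiv.symm i)

lemma mergeFun_comp {α β : Type*} {g j : ℕ} (F : α → β) (x : Fin g → α) (y : Fin j → α) :
    mergeFun (fun i => F (x i)) (fun i => F (y i)) = fun i => F (mergeFun x y i) := by
  funext i
  unfold mergeFun
  rcases finSumFinEquiv.symm i with s | s <;> simp

lemma mergeFun_zero {α : Type*} [Zero α] {g j : ℕ} :
    mergeFun (0 : Fin g → α) (0 : Fin j → α) = 0 := by
  funext i
  unfold mergeFun
  rcases finSumFinEquiv.symm i with s | s <;> simp

lemma mergeFun_add {α : Type*} [AddCommMonoid α] {g j : ℕ}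
    (x x' : Fin g → α) (y y' : Fin j → α) :
    mergeFun (x + x') (y + y') = mergeFun x y + mergeFun x' y' := by
  funext i
  simp only [mergeFun, Pi.add_apply]
  rcases finSumFinEquiv.symm i with s | s <;> simp

lemma sum_merge {α β A : Type*} [AddCommMonoid A] {g j : ℕ}
    (x : Fin g → α) (y : Fin j → α) (x' : Fin g → β) (y' : Fin j → β)
    (φ : α → β → A) :
    ∑ i, φ (mergeFun x y i) (mergeFun x' y' i)
      = (∑ i, φ (x i) (x' i)) + ∑ i, φ (y i) (y' i) := by
  rw [← Equiv.sum_comp finSumFinEquiv (fun i => φ (mergeFun x y i) (mergeFun x' y' i))]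
  rw [Fintype.sum_sum_type]
  congr 1 <;> (refine Finset.sum_congr rfl fun s _ => ?_) <;>
    simp [mergeFun]

variable {H : Type} [AddCommGroup H] [AddGroup.FG H] {P : FormParameter H}

/-- The merge morphism `W^g ⊕ W^j → W^{g+j}`. -/
def stdMerge (g j : ℕ) : WallHom ((stdWall P g).sum (stdWall P j)) (stdWall P (g + j)) where
  hom :=
    { neg :=
        { toFun := fun x => mergeFun x.1 x.2
          map_zero' := mergeFun_zero
          map_add' := fun x y => mergeFun_add x.1 y.1 x.2 y.2 }
      pos :=
        { toFun := fun y => (mergeFun y.1.1 y.2.1, mergeFun y.1.2 y.2.2)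
          map_zero' := by
            refine Prod.ext ?_ ?_ <;> exact mergeFun_zero
          map_add' := by
            intro y y'
            refine Prod.ext ?_ ?_ <;> exact mergeFun_add _ _ _ _ }
      comm := by
        intro x h
        refine Prod.ext ?_ ?_
        · exact mergeFun_zero
        · show mergeFun (fun i => x.1 i • h) (fun i => x.2 i • h)
            = fun i => mergeFun x.1 x.2 i • h
          exact mergeFun_comp (fun c : ℤ => c • h) x.1 x.2 }
  isWall := by
    refine ⟨fun x y => ?_, fun y y' => ?_, fun x => ?_, fun y => ?_⟩
    · show (∑ i, mergeFun x.1 x.2 i * mergeFun y.1.1 y.2.1 i)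
        = (∑ i, x.1 i * y.1.1 i) + ∑ i, x.2 i * y.2.1 i
      exact sum_merge _ _ _ _ (fun a b => a * b)
    · show (∑ i, mergeFun y'.1.1 y'.2.1 i • mergeFun y.1.2 y.2.2 i)
          + P.eps • ∑ i, mergeFun y.1.1 y.2.1 i • mergeFun y'.1.2 y'.2.2 i
        = ((∑ i, y'.1.1 i • y.1.2 i) + P.eps • ∑ i, y.1.1 i • y'.1.2 i)
          + ((∑ i, y'.2.1 i • y.2.2 i) + P.eps • ∑ i, y.2.1 i • y'.2.2 i)
      rw [sum_merge _ _ _ _ (fun (a : ℤ) (b : H) => a • b),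
        sum_merge _ _ _ _ (fun (a : ℤ) (b : H) => a • b), smul_add]
      abel
    · show (0 : (Fin (g + j) → ℤ) →+ P.G.Neg) (mergeFun x.1 x.2)
        = ((0 : (Fin g → ℤ) →+ P.G.Neg).coprod (0 : (Fin j → ℤ) →+ P.G.Neg)) x
      simp
      show (0 : P.G.Neg) = (0 : (Fin g → ℤ) →+ P.G.Neg) x.1 + (0 : (Fin j → ℤ) →+ P.G.Neg) x.2
      exact (add_zero (0 : P.G.Neg)).symm
    · show P.bd (∑ i, mergeFun y.1.1 y.2.1 i • mergeFun y.1.2 y.2.2 i)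
        = P.bd (∑ i, y.1.1 i • y.1.2 i) + P.bd (∑ i, y.2.1 i • y.2.2 i)
      rw [sum_merge _ _ _ _ (fun (a : ℤ) (b : H) => a • b), map_add]

end Merge

section Rho

variable {H : Type} [AddCommGroup H] {P : FormParameter H}

lemma alphaPos_neg' {C : HPair H} (S : WallAux P C) (y : C.Pos)
    (h1 : S.alphaPos y = 0) (h2 : S.mu y y = 0) : S.alphaPos (-y) = 0 := by
  have h := S.alphaPos_add y (-y)
  simp only [add_neg_cancel, alphaPos_zero', h1, map_neg, h2, neg_zero, map_zero,
    zero_add, add_zero] at h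
  exact h.symm

lemma alphaPos_zsmul' {C : HPair H} (S : WallAux P C) (y : C.Pos)
    (h1 : S.alphaPos y = 0) (h2 : S.mu y y = 0) (n : ℤ) : S.alphaPos (n • y) = 0 := by
  induction n using Int.induction_on with
  | zero => simpa using alphaPos_zero' S
  | succ n ih =>
      have e : ((n : ℤ) + 1) • y = (n : ℤ) • y + y := by rw [add_smul, one_smul]
      rw [e, S.alphaPos_add, ih, h1, map_zsmul, AddMonoidHom.smul_apply, h2]
      simp
  | pred n ih =>
      have e : (-(n : ℤ) - 1) • y = (-(n : ℤ)) • y + -y := by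
        rw [sub_smul, one_smul, sub_eq_add_neg]
      rw [e, S.alphaPos_add, ih, alphaPos_neg' S y h1 h2, map_zsmul,
        AddMonoidHom.smul_apply, map_neg, h2]
      simp

lemma alphaPos_sum' {C : HPair H} (S : WallAux P C) {ι : Type*} (s : Finset ι)
    (w : ι → C.Pos) (hα : ∀ i ∈ s, S.alphaPos (w i) = 0)
    (hμ : ∀ i ∈ s, ∀ j ∈ s, S.mu (w i) (w j) = 0) :
    S.alphaPos (∑ i ∈ s, w i) = 0 := by
  classical
  induction s using Finset.induction_on with
  | empty => simpa using alphaPos_zero' S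
  | @insert a s ha ih =>
      rw [Finset.sum_insert ha, S.alphaPos_add,
        ih (fun i hi => hα i (Finset.mem_insert_of_mem hi))
          (fun i hi j hj => hμ i (Finset.mem_insert_of_mem hi) j
            (Finset.mem_insert_of_mem hj)),
        hα a (Finset.mem_insert_self a s)]
      have hz : S.mu (w a) (∑ i ∈ s, w i) = 0 := by
        rw [map_sum]
        exact Finset.sum_eq_zero fun j hj =>
          hμ a (Finset.mem_insert_self a s) j (Finset.mem_insert_of_mem hj)
      rw [hz, map_zero]
      simp

variable [AddGroup.FG H]

lemma std_lam_apply {g : ℕ} (x : Fin g → ℤ) (w : (Fin g → ℤ) × (Fin g → H)) :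
    (stdWall P g).str.lam x w = ∑ i, x i * w.1 i := rfl

lemma std_mu_apply {g : ℕ} (w w' : (Fin g → ℤ) × (Fin g → H)) :
    (stdWall P g).str.mu w w' = (∑ i, w'.1 i • w.2 i) + P.eps • ∑ i, w.1 i • w'.2 i := rfl

lemma std_alphaNeg_apply {g : ℕ} (x : Fin g → ℤ) :
    (stdWall P g).str.alphaNeg x = 0 := rfl

lemma std_alphaPos_apply {g : ℕ} (w : (Fin g → ℤ) × (Fin g → H)) :
    (stdWall P g).str.alphaPos w = P.bd (∑ i, w.1 i • w.2 i) := rfl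

lemma std_tau_apply {g : ℕ} (x : Fin g → ℤ) (h : H) :
    (stdPair H g).tau x h = (0, fun i => x i • h) := rfl

variable {g : ℕ} {M : WallForm P} (f : WallHom (stdWall P g) M)

/-- `u t = f(a_t)`. -/
def uE (t : Fin g) : M.carrier.Neg := f.hom.neg (stdA t)

/-- `v t = f(b_t)`. -/
def vE (t : Fin g) : M.carrier.Pos := f.hom.pos (stdB t)

lemma lam_uv (t s : Fin g) : M.str.lam (uE f t) (vE f s) = if t = s then 1 else 0 := by
  unfold uE vE
  rw [f.isWall.1]; erw [std_lam_apply]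
  unfold stdA stdB
  simp [Pi.single_apply, ite_mul, Finset.sum_ite_eq']
  exact if_congr eq_comm rfl rfl

lemma mu_vv (t s : Fin g) : M.str.mu (vE f t) (vE f s) = 0 := by
  unfold vE
  rw [f.isWall.2.1]; erw [std_mu_apply]
  unfold stdB
  simp

lemma alphaNeg_u (t : Fin g) : M.str.alphaNeg (uE f t) = 0 := by
  unfold uE
  rw [f.isWall.2.2.1]; erw [std_alphaNeg_apply]

lemma alphaPos_v (t : Fin g) : M.str.alphaPos (vE f t) = 0 := by
  unfold vE
  rw [f.isWall.2.2.2]; erw [std_alphaPos_apply]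
  unfold stdB
  simp

/-- Any additive map vanishing on the `v t` and on `τ(u t, ·)` vanishes on the
image of `f₊`. -/
lemma hom_range_pos_zero {A : Type*} [AddCommGroup A] (L : M.carrier.Pos →+ A)
    (hv : ∀ t, L (vE f t) = 0)
    (hτ : ∀ (t : Fin g) (h : H), L (M.carrier.tau (uE f t) h) = 0)
    (p : (stdPair H g).Pos) : L (f.hom.pos p) = 0 := by
  classical
  have h1 : ∀ c : Fin g → ℤ, L (f.hom.pos (c, 0)) = 0 := by
    have e : (L.comp f.hom.pos).comp (AddMonoidHom.inl (Fin g → ℤ) (Fin g → H)) = 0 := by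
      refine AddMonoidHom.functions_ext A _ _ fun t => ?_
      have e2 : ((L.comp f.hom.pos).comp
            (AddMonoidHom.inl (Fin g → ℤ) (Fin g → H))).comp
            (AddMonoidHom.single (fun _ : Fin g => ℤ) t)
          = (0 : ℤ →+ A) := by
        refine AddMonoidHom.ext_int ?_
        show L (f.hom.pos (Pi.single t 1, 0)) = 0
        exact hv t
      intro x
      have := DFunLike.congr_fun e2 x
      simpa using this
    intro c
    exact DFunLike.congr_fun e c
  have h2 : ∀ η : Fin g → H, L (f.hom.pos (0, η)) = 0 := by
    have e : (L.comp f.hom.pos).comp (AddMonoidHom.inr (Fin g → ℤ) (Fin g → H)) = 0 := by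
      refine AddMonoidHom.functions_ext A _ _ fun t x => ?_
      show L (f.hom.pos (0, Pi.single t x)) = 0
      have hsingle : ((0 : Fin g → ℤ), Pi.single t x)
          = (stdWall P g).carrier.tau (stdA (P := P) t) x := by
        refine Prod.ext rfl ?_
        show Pi.single t x = fun i => stdA (P := P) t i • x
        funext i
        unfold stdA
        simp [Pi.single_apply, ite_smul]
      rw [hsingle, f.hom.comm]
      exact hτ t x
    intro η
    exact DFunLike.congr_fun e η
  have hq : p = ((p.1, 0) : (stdWall P g).carrier.Pos) + (0, p.2) := by
    refine Prod.ext ?_ ?_ <;> simp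
  rw [hq]; erw [map_add f.hom.pos, map_add, h1, h2, add_zero]

lemma hom_range_neg_zero {A : Type*} [AddCommGroup A] (L : M.carrier.Neg →+ A)
    (hu : ∀ t, L (uE f t) = 0) (x : (stdPair H g).Neg) : L (f.hom.neg x) = 0 := by
  classical
  have e : L.comp f.hom.neg = 0 := by
    refine AddMonoidHom.functions_ext A _ _ fun t => ?_
    have e2 : (L.comp f.hom.neg).comp (AddMonoidHom.single (fun _ : Fin g => ℤ) t)
        = (0 : ℤ →+ A) := by
      refine AddMonoidHom.ext_int ?_
      show L (f.hom.neg (Pi.single t 1)) = 0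
      exact hu t
    intro x
    have := DFunLike.congr_fun e2 x
    exact this
  exact DFunLike.congr_fun e x

/-- Projection of `M₋` onto the orthogonal complement of the image of `f`. -/
def pN (x : M.carrier.Neg) : M.carrier.Neg :=
  x - ∑ t, M.str.lam x (vE f t) • uE f t

/-- Projection of `M₊` onto the orthogonal complement of the image of `f`. -/
def pP (y : M.carrier.Pos) : M.carrier.Pos :=
  y - (∑ t, M.str.lam (uE f t) y • vE f t)
    - ∑ t, M.carrier.tau (uE f t) (M.str.mu y (vE f t))

lemma lam_pN_v (x : M.carrier.Neg) (s : Fin g) :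
    M.str.lam (pN f x) (vE f s) = 0 := by
  unfold pN
  rw [map_sub, AddMonoidHom.sub_apply, map_sum, AddMonoidHom.finset_sum_apply]
  have h : ∀ t : Fin g, M.str.lam (M.str.lam x (vE f t) • uE f t) (vE f s)
      = if t = s then M.str.lam x (vE f t) else 0 := by
    intro t
    rw [map_zsmul, AddMonoidHom.smul_apply, smul_eq_mul, lam_uv]
    split <;> simp
  rw [Finset.sum_congr rfl fun t _ => h t, Finset.sum_ite_eq' Finset.univ s]
  simp

lemma lam_u_pP (s : Fin g) (y : M.carrier.Pos) :
    M.str.lam (uE f s) (pP f y) = 0 := by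
  unfold pP
  rw [map_sub, map_sub, map_sum, map_sum]
  have h1 : ∀ t : Fin g, M.str.lam (uE f s) (M.str.lam (uE f t) y • vE f t)
      = if s = t then M.str.lam (uE f t) y else 0 := by
    intro t
    rw [map_zsmul, smul_eq_mul, lam_uv]
    split <;> simp
  have h2 : ∀ t : Fin g,
      M.str.lam (uE f s) (M.carrier.tau (uE f t) (M.str.mu y (vE f t))) = 0 :=
    fun t => M.str.lam_tau _ _ _
  rw [Finset.sum_congr rfl fun t _ => h1 t, Finset.sum_congr rfl fun t _ => h2 t,
    Finset.sum_ite_eq Finset.univ s]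
  simp

lemma mu_pP_v (y : M.carrier.Pos) (s : Fin g) :
    M.str.mu (pP f y) (vE f s) = 0 := by
  unfold pP
  rw [map_sub, AddMonoidHom.sub_apply, map_sub, AddMonoidHom.sub_apply,
    map_sum, AddMonoidHom.finset_sum_apply, map_sum, AddMonoidHom.finset_sum_apply]
  have h1 : ∀ t : Fin g, M.str.mu (M.str.lam (uE f t) y • vE f t) (vE f s) = 0 := by
    intro t
    rw [map_zsmul, AddMonoidHom.smul_apply, mu_vv, smul_zero]
  have h2 : ∀ t : Fin g,
      M.str.mu (M.carrier.tau (uE f t) (M.str.mu y (vE f t))) (vE f s)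
      = if t = s then M.str.mu y (vE f t) else 0 := by
    intro t
    rw [M.str.mu_tau, lam_uv]
    split <;> simp
  rw [Finset.sum_congr rfl fun t _ => h1 t, Finset.sum_congr rfl fun t _ => h2 t,
    Finset.sum_ite_eq' Finset.univ s]
  simp

lemma mu_pP_tau_u (y : M.carrier.Pos) (t : Fin g) (h : H) :
    M.str.mu (pP f y) (M.carrier.tau (uE f t) h) = 0 := by
  rw [M.str.mu_symm, M.str.mu_tau, lam_u_pP, zero_smul, smul_zero]

lemma pN_mem (x : M.carrier.Neg) :
    pN f x ∈ (f.hom.rangeSub.perp M.str).neg := by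
  rintro w ⟨p, rfl⟩
  exact hom_range_pos_zero f (M.str.lam (pN f x)) (lam_pN_v f x)
    (fun t h => M.str.lam_tau _ _ _) p

lemma pP_mem (y : M.carrier.Pos) :
    pP f y ∈ (f.hom.rangeSub.perp M.str).pos := by
  constructor
  · rintro v ⟨p, rfl⟩
    have := hom_range_neg_zero f (M.str.lam.flip (pP f y))
      (fun t => lam_u_pP f t y) p
    simpa using this
  · rintro w ⟨p, rfl⟩
    exact hom_range_pos_zero f (M.str.mu (pP f y)) (mu_pP_v f y)
      (mu_pP_tau_u f y) p

lemma lam_pN_pP (x : M.carrier.Neg) (y : M.carrier.Pos) :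
    M.str.lam (pN f x) (pP f y)
      = M.str.lam x y - ∑ t, M.str.lam x (vE f t) * M.str.lam (uE f t) y := by
  have h1 : M.str.lam (pN f x) (pP f y) = M.str.lam (pN f x) y := by
    unfold pP
    rw [map_sub, map_sub, map_sum, map_sum]
    have e1 : ∀ t : Fin g,
        M.str.lam (pN f x) (M.str.lam (uE f t) y • vE f t) = 0 := by
      intro t
      rw [map_zsmul, lam_pN_v, smul_zero]
    have e2 : ∀ t : Fin g,
        M.str.lam (pN f x) (M.carrier.tau (uE f t) (M.str.mu y (vE f t))) = 0 :=
      fun t => M.str.lam_tau _ _ _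
    rw [Finset.sum_congr rfl fun t _ => e1 t, Finset.sum_congr rfl fun t _ => e2 t]
    simp
  rw [h1]
  unfold pN
  rw [map_sub, AddMonoidHom.sub_apply, map_sum, AddMonoidHom.finset_sum_apply]
  congr 1
  refine Finset.sum_congr rfl fun t _ => ?_
  rw [map_zsmul, AddMonoidHom.smul_apply, smul_eq_mul]

lemma mu_pP_pP (y z : M.carrier.Pos) :
    M.str.mu (pP f y) (pP f z)
      = M.str.mu y z - (∑ t, M.str.lam (uE f t) z • M.str.mu y (vE f t))
        - P.eps • ∑ t, M.str.lam (uE f t) y • M.str.mu z (vE f t) := by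
  have h1 : M.str.mu (pP f y) (pP f z) = M.str.mu (pP f y) z := by
    have hz : pP f z = z - (∑ t, M.str.lam (uE f t) z • vE f t)
        - ∑ t, M.carrier.tau (uE f t) (M.str.mu z (vE f t)) := rfl
    rw [hz, map_sub, map_sub, map_sum, map_sum]
    have e1 : ∀ t : Fin g,
        M.str.mu (pP f y) (M.str.lam (uE f t) z • vE f t) = 0 := by
      intro t
      rw [map_zsmul, mu_pP_v, smul_zero]
    have e2 : ∀ t : Fin g,
        M.str.mu (pP f y) (M.carrier.tau (uE f t) (M.str.mu z (vE f t))) = 0 :=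
      fun t => mu_pP_tau_u f y t _
    rw [Finset.sum_congr rfl fun t _ => e1 t, Finset.sum_congr rfl fun t _ => e2 t]
    simp
  rw [h1]
  unfold pP
  rw [map_sub, AddMonoidHom.sub_apply, map_sub, AddMonoidHom.sub_apply,
    map_sum, AddMonoidHom.finset_sum_apply, map_sum, AddMonoidHom.finset_sum_apply]
  have e3 : ∀ t : Fin g, M.str.mu (M.str.lam (uE f t) y • vE f t) z
      = P.eps • (M.str.lam (uE f t) y • M.str.mu z (vE f t)) := by
    intro t
    rw [map_zsmul, AddMonoidHom.smul_apply, M.str.mu_symm (vE f t) z, smul_comm]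
  have e4 : ∀ t : Fin g,
      M.str.mu (M.carrier.tau (uE f t) (M.str.mu y (vE f t))) z
      = M.str.lam (uE f t) z • M.str.mu y (vE f t) :=
    fun t => M.str.mu_tau _ _ _
  rw [Finset.sum_congr rfl fun t _ => e3 t, Finset.sum_congr rfl fun t _ => e4 t,
    ← Finset.smul_sum]
  abel

lemma alphaNeg_pN (x : M.carrier.Neg) :
    M.str.alphaNeg (pN f x) = M.str.alphaNeg x := by
  unfold pN
  rw [map_sub, map_sum]
  have e : ∀ t : Fin g, M.str.alphaNeg (M.str.lam x (vE f t) • uE f t) = 0 := by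
    intro t
    rw [map_zsmul, alphaNeg_u, smul_zero]
  rw [Finset.sum_congr rfl fun t _ => e t]
  simp

lemma alphaPos_pP (y : M.carrier.Pos) :
    M.str.alphaPos (pP f y)
      + P.bd (∑ t, M.str.lam (uE f t) y • M.str.mu y (vE f t))
      = M.str.alphaPos y := by
  set A : M.carrier.Pos := ∑ t, M.str.lam (uE f t) y • vE f t with hA
  set B : M.carrier.Pos :=
    ∑ t, M.carrier.tau (uE f t) (M.str.mu y (vE f t)) with hB
  have hpP : pP f y = y - A - B := rfl
  have hy : y = (y - A - B) + (A + B) := by abel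
  have hαA : M.str.alphaPos A = 0 := by
    rw [hA]
    refine alphaPos_sum' M.str _ _ (fun t _ => ?_) (fun t _ s _ => ?_)
    · exact alphaPos_zsmul' M.str _ (alphaPos_v f t) (mu_vv f t t) _
    · rw [map_zsmul M.str.mu, AddMonoidHom.smul_apply,
        map_zsmul (M.str.mu (vE f t)), mu_vv, smul_zero, smul_zero]
  have hαB : M.str.alphaPos B = 0 := by
    rw [hB]
    refine alphaPos_sum' M.str _ _ (fun t _ => ?_) (fun t _ s _ => ?_)
    · rw [M.str.alphaPos_tau, alphaNeg_u]
      simp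
    · rw [M.str.mu_tau, M.str.lam_tau, zero_smul]
  have hμAB : M.str.mu A B
      = P.eps • ∑ t, M.str.lam (uE f t) y • M.str.mu y (vE f t) := by
    rw [hA, map_sum M.str.mu, AddMonoidHom.finset_sum_apply]
    have e1 : ∀ t : Fin g, M.str.mu (M.str.lam (uE f t) y • vE f t) B
        = M.str.lam (uE f t) y • M.str.mu (vE f t) B := by
      intro t
      rw [map_zsmul, AddMonoidHom.smul_apply]
    have e2 : ∀ t : Fin g, M.str.mu (vE f t) B
        = P.eps • M.str.mu y (vE f t) := by
      intro t
      rw [hB, map_sum]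
      have e3 : ∀ s : Fin g,
          M.str.mu (vE f t) (M.carrier.tau (uE f s) (M.str.mu y (vE f s)))
          = if s = t then P.eps • M.str.mu y (vE f s) else 0 := by
        intro s
        rw [M.str.mu_symm, M.str.mu_tau, lam_uv]
        split <;> simp
      rw [Finset.sum_congr rfl fun s _ => e3 s, Finset.sum_ite_eq' Finset.univ t]
      simp
    rw [Finset.sum_congr rfl fun t _ => (e1 t).trans (by rw [e2 t]),
      Finset.smul_sum]
    refine Finset.sum_congr rfl fun t _ => ?_
    rw [smul_comm]
  have hμ0 : M.str.mu (pP f y) (A + B) = 0 := by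
    rw [map_add]
    have hA0 : M.str.mu (pP f y) A = 0 := by
      rw [hA, map_sum]
      refine Finset.sum_eq_zero fun t _ => ?_
      rw [map_zsmul, mu_pP_v, smul_zero]
    have hB0 : M.str.mu (pP f y) B = 0 := by
      rw [hB, map_sum]
      exact Finset.sum_eq_zero fun t _ => mu_pP_tau_u f y t _
    rw [hA0, hB0, add_zero]
  have key := M.str.alphaPos_add (pP f y) (A + B)
  rw [hμ0, map_zero, add_zero, hpP] at key
  rw [← hy] at key
  rw [M.str.alphaPos_add A B, hαA, hαB, zero_add, zero_add, hμAB, P.bd_eps] at key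
  rw [hpP]
  exact key.symm

lemma pP_tau (x : M.carrier.Neg) (h : H) :
    pP f (M.carrier.tau x h) = M.carrier.tau (pN f x) h := by
  unfold pP pN
  rw [map_sub, AddMonoidHom.sub_apply, map_sum, AddMonoidHom.finset_sum_apply]
  have e1 : ∀ t : Fin g,
      M.str.lam (uE f t) (M.carrier.tau x h) • vE f t = 0 := by
    intro t
    rw [M.str.lam_tau, zero_smul]
  have e2 : ∀ t : Fin g,
      M.carrier.tau (uE f t) (M.str.mu (M.carrier.tau x h) (vE f t))
      = M.str.lam x (vE f t) • M.carrier.tau (uE f t) h := by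
    intro t
    rw [M.str.mu_tau, map_zsmul]
  have e3 : ∀ t : Fin g,
      M.carrier.tau (M.str.lam x (vE f t) • uE f t) h
      = M.str.lam x (vE f t) • M.carrier.tau (uE f t) h := by
    intro t
    rw [map_zsmul, AddMonoidHom.smul_apply]
  rw [Finset.sum_congr rfl fun t _ => e1 t, Finset.sum_congr rfl fun t _ => e2 t,
    Finset.sum_congr rfl fun t _ => e3 t]
  simp

lemma pN_add (x x' : M.carrier.Neg) : pN f (x + x') = pN f x + pN f x' := by
  unfold pN
  have e : ∀ t : Fin g, M.str.lam (x + x') (vE f t) • uE f t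
      = M.str.lam x (vE f t) • uE f t + M.str.lam x' (vE f t) • uE f t := by
    intro t
    rw [map_add, AddMonoidHom.add_apply, add_smul]
  rw [Finset.sum_congr rfl fun t _ => e t, Finset.sum_add_distrib]
  abel

lemma pP_add (y y' : M.carrier.Pos) : pP f (y + y') = pP f y + pP f y' := by
  unfold pP
  have e1 : ∀ t : Fin g, M.str.lam (uE f t) (y + y') • vE f t
      = M.str.lam (uE f t) y • vE f t + M.str.lam (uE f t) y' • vE f t := by
    intro t
    rw [map_add, add_smul]
  have e2 : ∀ t : Fin g,
      M.carrier.tau (uE f t) (M.str.mu (y + y') (vE f t))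
      = M.carrier.tau (uE f t) (M.str.mu y (vE f t))
        + M.carrier.tau (uE f t) (M.str.mu y' (vE f t)) := by
    intro t
    rw [map_add, AddMonoidHom.add_apply, map_add]
  rw [Finset.sum_congr rfl fun t _ => e1 t, Finset.sum_congr rfl fun t _ => e2 t,
    Finset.sum_add_distrib, Finset.sum_add_distrib]
  abel

end Rho

section RhoDef

variable {H : Type} [AddCommGroup H] [AddGroup.FG H] {P : FormParameter H}
variable {g : ℕ} {M : WallForm P} (f : WallHom (stdWall P g) M)

/-- The splitting morphism `M → f(W^g)^⊥ ⊕ W^g`. -/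
def rho : WallHom M (((f.hom.rangeSub.perp M.str).toWall).sum (stdWall P g)) where
  hom :=
    { neg :=
        { toFun := fun x => (⟨pN f x, pN_mem f x⟩, fun t => M.str.lam x (vE f t))
          map_zero' := by
            refine Prod.ext (Subtype.ext ?_) ?_
            · show pN f 0 = 0
              unfold pN
              simp
            · funext t
              show M.str.lam 0 (vE f t) = 0
              simp
          map_add' := by
            intro x x'
            refine Prod.ext (Subtype.ext ?_) ?_
            · show pN f (x + x') = pN f x + pN f x'
              exact pN_add f x x'
            · funext t
              show M.str.lam (x + x') (vE f t)
                = M.str.lam x (vE f t) + M.str.lam x' (vE f t)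
              rw [map_add, AddMonoidHom.add_apply] }
      pos :=
        { toFun := fun y => (⟨pP f y, pP_mem f y⟩,
            (fun t => M.str.lam (uE f t) y, fun t => M.str.mu y (vE f t)))
          map_zero' := by
            refine Prod.ext (Subtype.ext ?_) (Prod.ext ?_ ?_)
            · show pP f 0 = 0
              unfold pP
              simp
            · funext t
              show M.str.lam (uE f t) 0 = 0
              simp
            · funext t
              show M.str.mu 0 (vE f t) = 0
              simp
          map_add' := by
            intro y y'
            refine Prod.ext (Subtype.ext ?_) (Prod.ext ?_ ?_)
            · show pP f (y + y') = pP f y + pP f y'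
              exact pP_add f y y'
            · funext t
              show M.str.lam (uE f t) (y + y')
                = M.str.lam (uE f t) y + M.str.lam (uE f t) y'
              rw [map_add]
            · funext t
              show M.str.mu (y + y') (vE f t)
                = M.str.mu y (vE f t) + M.str.mu y' (vE f t)
              rw [map_add, AddMonoidHom.add_apply] }
      comm := by
        intro x h
        refine Prod.ext (Subtype.ext ?_) (Prod.ext ?_ ?_)
        · show pP f (M.carrier.tau x h) = M.carrier.tau (pN f x) h
          exact pP_tau f x h
        · funext t
          show M.str.lam (uE f t) (M.carrier.tau x h) = 0
          exact M.str.lam_tau _ _ _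
        · funext t
          show M.str.mu (M.carrier.tau x h) (vE f t) = M.str.lam x (vE f t) • h
          exact M.str.mu_tau _ _ _ }
  isWall := by
    refine ⟨fun x y => ?_, fun y y' => ?_, fun x => ?_, fun y => ?_⟩
    · show M.str.lam (pN f x) (pP f y)
          + ∑ t, M.str.lam x (vE f t) * M.str.lam (uE f t) y
        = M.str.lam x y
      rw [lam_pN_pP]
      abel
    · show M.str.mu (pP f y) (pP f y')
          + ((∑ t, M.str.lam (uE f t) y' • M.str.mu y (vE f t))
            + P.eps • ∑ t, M.str.lam (uE f t) y • M.str.mu y' (vE f t))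
        = M.str.mu y y'
      rw [mu_pP_pP]
      abel
    · show M.str.alphaNeg (pN f x)
          + (0 : (Fin g → ℤ) →+ P.G.Neg) (fun t => M.str.lam x (vE f t))
        = M.str.alphaNeg x
      rw [alphaNeg_pN]
      simp
    · show M.str.alphaPos (pP f y)
          + P.bd (∑ t, M.str.lam (uE f t) y • M.str.mu y (vE f t))
        = M.str.alphaPos y
      exact alphaPos_pP f y

end RhoDef

/-- For a morphism `f : W^g → M` of Wall forms, the stable
rank satisfies `r̄(f(W^g)^⊥) ≥ r̄(M) − g`. -/
theorem statement_5 {H : Type} [AddCommGroup H] [AddGroup.FG H]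
    (P : FormParameter H) (M : WallForm P) (g : ℕ)
    (f : WallHom (stdWall P g) M) (k : ℕ) (hk : srankGE M k) :
    srankGE (f.hom.rangeSub.perp M.str).toWall (k - g) := by
  obtain ⟨j, hj⟩ := hk
  obtain ⟨φ⟩ := hj
  by_cases hkg : g ≤ k
  · refine ⟨g + j, ?_⟩
    have hnum : k - g + (g + j) = k + j := by omega
    rw [hnum]
    exact Nonempty.intro
      (φ.comp' ((WallHom.sumHom (rho f) (WallHom.id' (stdWall P j))).comp'
        ((WallHom.assoc _ _ _).comp'
          (WallHom.sumHom (WallHom.id' _) (stdMerge g j)))))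
  · have h0 : k - g = 0 := by omega
    rw [h0]
    exact ⟨0, Nonempty.intro (WallHom.fromZero _)⟩
end

section
/- (Transitivity) Let M be a Wall form such that the complex L(M) is connected, i.e., any two morphisms W → M can be joined by a finite sequence of morphisms W → M in which consecutive morphisms have orthogonal images. Then for any two morphisms f₁, f₂ : W → M there exists a Wall form automorphism Φ : M → M such that f₁ = Φ ∘ f₂. -/
section Transitivity

variable {H : Type} [AddCommGroup H] {P : FormParameter H}

/-- The identity morphism of a Wall form. -/
def wallHomId (M : WallForm P) : WallHom M M where
  hom := ⟨AddMonoidHom.id _, AddMonoidHom.id _, fun _ _ => rfl⟩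
  isWall := ⟨fun _ _ => rfl, fun _ _ => rfl, fun _ => rfl, fun _ => rfl⟩

/-- The identity automorphism of a Wall form. -/
def wallIsoId (M : WallForm P) : WallIso M M where
  toHom := wallHomId M
  invHom := wallHomId M
  left_neg := fun _ => rfl
  right_neg := fun _ => rfl
  left_pos := fun _ => rfl
  right_pos := fun _ => rfl

/-- Composition of Wall form morphisms. -/
def wallHomComp {A B C : WallForm P} (f : WallHom A B) (g : WallHom B C) :
    WallHom A C where
  hom := ⟨g.hom.neg.comp f.hom.neg, g.hom.pos.comp f.hom.pos, by
    intro x h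
    simp only [AddMonoidHom.comp_apply]
    rw [f.hom.comm, g.hom.comm]⟩
  isWall := by
    obtain ⟨l1, m1, n1, p1⟩ := f.isWall
    obtain ⟨l2, m2, n2, p2⟩ := g.isWall
    exact ⟨fun x y => by simp only [AddMonoidHom.comp_apply]; rw [l2, l1],
      fun y y' => by simp only [AddMonoidHom.comp_apply]; rw [m2, m1],
      fun x => by simp only [AddMonoidHom.comp_apply]; rw [n2, n1],
      fun y => by simp only [AddMonoidHom.comp_apply]; rw [p2, p1]⟩

/-- Composition of Wall form automorphisms (`wallIsoComp Φ Ψ` applies `Ψ`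
first, then `Φ`). -/
def wallIsoComp {M : WallForm P} (Φ Ψ : WallIso M M) : WallIso M M where
  toHom := wallHomComp Ψ.toHom Φ.toHom
  invHom := wallHomComp Φ.invHom Ψ.invHom
  left_neg := fun x => by
    show Ψ.invHom.hom.neg (Φ.invHom.hom.neg (Φ.toHom.hom.neg (Ψ.toHom.hom.neg x))) = x
    rw [Φ.left_neg, Ψ.left_neg]
  right_neg := fun x => by
    show Φ.toHom.hom.neg (Ψ.toHom.hom.neg (Ψ.invHom.hom.neg (Φ.invHom.hom.neg x))) = x
    rw [Ψ.right_neg, Φ.right_neg]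
  left_pos := fun y => by
    show Ψ.invHom.hom.pos (Φ.invHom.hom.pos (Φ.toHom.hom.pos (Ψ.toHom.hom.pos y))) = y
    rw [Φ.left_pos, Ψ.left_pos]
  right_pos := fun y => by
    show Φ.toHom.hom.pos (Ψ.toHom.hom.pos (Ψ.invHom.hom.pos (Φ.invHom.hom.pos y))) = y
    rw [Ψ.right_pos, Φ.right_pos]

variable (M : WallForm P) (a₁ a₂ : M.carrier.Neg) (b₁ b₂ : M.carrier.Pos)

/-- The negative part of the swap automorphism. -/
def swapNeg : M.carrier.Neg →+ M.carrier.Neg :=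
  AddMonoidHom.mk'
    (fun x => x + (M.str.lam x b₂ - M.str.lam x b₁) • (a₁ - a₂))
    (by
      intro x y
      simp only [map_add, AddMonoidHom.add_apply]
      module)

/-- The positive part of the swap automorphism. -/
def swapPos : M.carrier.Pos →+ M.carrier.Pos :=
  AddMonoidHom.mk'
    (fun y => y + (M.str.lam a₂ y - M.str.lam a₁ y) • (b₁ - b₂)
        + M.carrier.tau (a₂ - a₁) (M.str.mu y b₁)
        + M.carrier.tau (a₁ - a₂) (M.str.mu y b₂))
    (by
      intro y y'
      simp only [map_add, AddMonoidHom.add_apply]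
      module)

lemma swapNeg_apply (x : M.carrier.Neg) :
    swapNeg M a₁ a₂ b₁ b₂ x
      = x + (M.str.lam x b₂ - M.str.lam x b₁) • (a₁ - a₂) := rfl

lemma swapPos_apply (y : M.carrier.Pos) :
    swapPos M a₁ a₂ b₁ b₂ y
      = y + (M.str.lam a₂ y - M.str.lam a₁ y) • (b₁ - b₂)
        + M.carrier.tau (a₂ - a₁) (M.str.mu y b₁)
        + M.carrier.tau (a₁ - a₂) (M.str.mu y b₂) := rfl

/-- The swap construction: given two "hyperbolic" pairs `(a₁, b₁)` and
`(a₂, b₂)` in `M` which are mutually orthogonal, there is an automorphism of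
`M` interchanging them. -/
theorem swap_exists
    (h11 : M.str.lam a₁ b₁ = 1) (h22 : M.str.lam a₂ b₂ = 1)
    (h12 : M.str.lam a₁ b₂ = 0) (h21 : M.str.lam a₂ b₁ = 0)
    (m11 : M.str.mu b₁ b₁ = 0) (m22 : M.str.mu b₂ b₂ = 0)
    (m12 : M.str.mu b₁ b₂ = 0) (m21 : M.str.mu b₂ b₁ = 0)
    (al1 : M.str.alphaNeg a₁ = 0) (al2 : M.str.alphaNeg a₂ = 0)
    (ap1 : M.str.alphaPos b₁ = 0) (ap2 : M.str.alphaPos b₂ = 0) :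
    ∃ Φ : WallIso M M,
      Φ.toHom.hom.neg a₂ = a₁ ∧ Φ.toHom.hom.pos b₂ = b₁ := by
  -- left-argument expansion lemmas
  have lam_sl : ∀ (n : ℤ) x w, M.str.lam (n • x) w = n • M.str.lam x w :=
    fun n x w => map_zsmul (M.str.lam.flip w) n x
  have lam_subl : ∀ x x' w, M.str.lam (x - x') w = M.str.lam x w - M.str.lam x' w :=
    fun x x' w => map_sub (M.str.lam.flip w) x x'
  have lam_addl : ∀ x x' w, M.str.lam (x + x') w = M.str.lam x w + M.str.lam x' w :=
    fun x x' w => map_add (M.str.lam.flip w) x x'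
  have mu_sl : ∀ (n : ℤ) y w, M.str.mu (n • y) w = n • M.str.mu y w :=
    fun n y w => map_zsmul (M.str.mu.flip w) n y
  have mu_subl : ∀ y y' w, M.str.mu (y - y') w = M.str.mu y w - M.str.mu y' w :=
    fun y y' w => map_sub (M.str.mu.flip w) y y'
  have mu_addl : ∀ y y' w, M.str.mu (y + y') w = M.str.mu y w + M.str.mu y' w :=
    fun y y' w => map_add (M.str.mu.flip w) y y'
  have tau_sl : ∀ (n : ℤ) x h, M.carrier.tau (n • x) h = n • M.carrier.tau x h :=
    fun n x h => map_zsmul (M.carrier.tau.flip h) n x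
  have tau_subl : ∀ x x' h,
      M.carrier.tau (x - x') h = M.carrier.tau x h - M.carrier.tau x' h :=
    fun x x' h => map_sub (M.carrier.tau.flip h) x x'
  have tau_addl : ∀ x x' h,
      M.carrier.tau (x + x') h = M.carrier.tau x h + M.carrier.tau x' h :=
    fun x x' h => map_add (M.carrier.tau.flip h) x x'
  -- the symmetric form of `mu_tau`
  have mt' : ∀ (z : M.carrier.Pos) (x : M.carrier.Neg) (h : H),
      M.str.mu z (M.carrier.tau x h) = P.eps • (M.str.lam x z • h) := by
    intro z x h
    rw [M.str.mu_symm, M.str.mu_tau]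
  have lt : ∀ (x x' : M.carrier.Neg) (h : H),
      M.str.lam x (M.carrier.tau x' h) = 0 :=
    fun x x' h => M.str.lam_tau x x' h
  have mtl : ∀ (x : M.carrier.Neg) (h : H) y,
      M.str.mu (M.carrier.tau x h) y = M.str.lam x y • h :=
    fun x h y => M.str.mu_tau x h y
  -- basic facts about `alphaPos`
  have ap0 : M.str.alphaPos 0 = 0 := by
    have h := M.str.alphaPos_add 0 0
    simp only [add_zero, map_zero, AddMonoidHom.zero_apply] at h
    exact left_eq_add.mp h
  have apneg : ∀ y, M.str.alphaPos y = 0 → M.str.mu y y = 0 →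
      M.str.alphaPos (-y) = 0 := by
    intro y hy hyy
    have h := M.str.alphaPos_add y (-y)
    simp only [add_neg_cancel, ap0, hy, map_neg, hyy, neg_zero, map_zero,
      add_zero, zero_add] at h
    exact h.symm
  have apsmul : ∀ (z : M.carrier.Pos), M.str.alphaPos z = 0 →
      M.str.mu z z = 0 → ∀ n : ℤ, M.str.alphaPos (n • z) = 0 := by
    intro z hz hzz n
    induction n using Int.induction_on with
    | zero => simpa using ap0
    | succ n ih =>
        have h := M.str.alphaPos_add ((n : ℤ) • z) z
        simp only [ih, hz, mu_sl, hzz, smul_zero, map_zero, add_zero,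
          zero_add] at h
        rw [add_smul, one_smul]
        exact h
    | pred n ih =>
        have hnz : M.str.alphaPos (-z) = 0 := apneg z hz hzz
        have h := M.str.alphaPos_add ((-n : ℤ) • z) (-z)
        simp only [ih, hnz, map_neg, mu_sl, hzz, smul_zero, neg_zero,
          map_zero, add_zero, zero_add] at h
        rw [sub_smul, one_smul, sub_eq_add_neg]
        exact h
  have hzz : M.str.mu (b₁ - b₂) (b₁ - b₂) = 0 := by
    rw [mu_subl]
    simp only [map_sub, AddMonoidHom.sub_apply, m11, m12, m21, m22]
    simp
  have hza : M.str.alphaPos (b₁ - b₂) = 0 := by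
    have h := M.str.alphaPos_add b₁ (-b₂)
    simp only [apneg b₂ ap2 m22, ap1, map_neg, m12, neg_zero, map_zero,
      add_zero, zero_add] at h
    rw [sub_eq_add_neg]
    exact h
  have hd21 : M.str.alphaNeg (a₂ - a₁) = 0 := by
    rw [map_sub, al1, al2, sub_zero]
  have hd12 : M.str.alphaNeg (a₁ - a₂) = 0 := by
    rw [map_sub, al1, al2, sub_zero]
  have hTz : ∀ (x : M.carrier.Neg) (k : H), M.str.alphaNeg x = 0 →
      M.str.alphaPos (M.carrier.tau x k) = 0 := by
    intro x k hx
    rw [M.str.alphaPos_tau, hx, map_zero, AddMonoidHom.zero_apply]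
  -- `bd` kills an outer `eps`
  have hbd1 : ∀ (n : ℤ) (k : H), P.bd (P.eps • (n • k)) = n • P.bd k := by
    intro n k
    rw [P.bd_eps, map_zsmul]
  -- key evaluation lemmas for the swap maps
  have Lb1 : ∀ x, M.str.lam (swapNeg M a₁ a₂ b₁ b₂ x) b₁ = M.str.lam x b₂ := by
    intro x
    rw [swapNeg_apply, lam_addl, lam_sl, lam_subl, h11, h21]
    push_cast [smul_eq_mul]
    ring
  have Lb2 : ∀ x, M.str.lam (swapNeg M a₁ a₂ b₁ b₂ x) b₂ = M.str.lam x b₁ := by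
    intro x
    rw [swapNeg_apply, lam_addl, lam_sl, lam_subl, h12, h22]
    push_cast [smul_eq_mul]
    ring
  have La1 : ∀ y, M.str.lam a₁ (swapPos M a₁ a₂ b₁ b₂ y) = M.str.lam a₂ y := by
    intro y
    rw [swapPos_apply]
    simp only [map_add, map_zsmul, map_sub, AddMonoidHom.sub_apply, lt, h11,
      h12, smul_eq_mul]
    ring
  have La2 : ∀ y, M.str.lam a₂ (swapPos M a₁ a₂ b₁ b₂ y) = M.str.lam a₁ y := by
    intro y
    rw [swapPos_apply]
    simp only [map_add, map_zsmul, map_sub, AddMonoidHom.sub_apply, lt, h21,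
      h22, smul_eq_mul]
    ring
  have Mb1 : ∀ y, M.str.mu (swapPos M a₁ a₂ b₁ b₂ y) b₁ = M.str.mu y b₂ := by
    intro y
    rw [swapPos_apply, mu_addl, mu_addl, mu_addl, mu_sl, mu_subl,
      mtl, mtl, lam_subl, lam_subl, h11, h21, m11, m21]
    module
  have Mb2 : ∀ y, M.str.mu (swapPos M a₁ a₂ b₁ b₂ y) b₂ = M.str.mu y b₁ := by
    intro y
    rw [swapPos_apply, mu_addl, mu_addl, mu_addl, mu_sl, mu_subl,
      mtl, mtl, lam_subl, lam_subl, h12, h22, m12, m22]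
    module
  -- the swap maps are involutions
  have invn : ∀ x, swapNeg M a₁ a₂ b₁ b₂ (swapNeg M a₁ a₂ b₁ b₂ x) = x := by
    intro x
    rw [swapNeg_apply M a₁ a₂ b₁ b₂ (swapNeg M a₁ a₂ b₁ b₂ x), Lb1, Lb2,
      swapNeg_apply]
    module
  have invp : ∀ y, swapPos M a₁ a₂ b₁ b₂ (swapPos M a₁ a₂ b₁ b₂ y) = y := by
    intro y
    rw [swapPos_apply M a₁ a₂ b₁ b₂ (swapPos M a₁ a₂ b₁ b₂ y), La1, La2,
      Mb1, Mb2, swapPos_apply]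
    simp only [tau_subl]
    module
  -- the swap maps form an `H`-map
  have hcomm : ∀ x h, swapPos M a₁ a₂ b₁ b₂ (M.carrier.tau x h)
      = M.carrier.tau (swapNeg M a₁ a₂ b₁ b₂ x) h := by
    intro x h
    rw [swapPos_apply, swapNeg_apply, mtl, mtl, tau_addl, tau_sl, lt, lt]
    simp only [tau_subl, map_zsmul]
    module
  -- preservation of `lam`
  have lamP : ∀ x y, M.str.lam (swapNeg M a₁ a₂ b₁ b₂ x)
      (swapPos M a₁ a₂ b₁ b₂ y) = M.str.lam x y := by
    intro x y
    rw [swapNeg_apply, lam_addl, lam_sl, lam_subl, La1, La2, swapPos_apply]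
    simp only [map_add, map_zsmul, map_sub, AddMonoidHom.sub_apply, lt,
      smul_eq_mul]
    ring
  -- preservation of `mu`
  have muP : ∀ y y', M.str.mu (swapPos M a₁ a₂ b₁ b₂ y)
      (swapPos M a₁ a₂ b₁ b₂ y') = M.str.mu y y' := by
    intro y y'
    rw [swapPos_apply M a₁ a₂ b₁ b₂ y, mu_addl, mu_addl, mu_addl, mu_sl,
      mu_subl, mtl, mtl, lam_subl, lam_subl, La1, La2,
      swapPos_apply M a₁ a₂ b₁ b₂ y']
    simp only [map_add, map_zsmul, map_sub, AddMonoidHom.sub_apply, mt',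
      lam_subl, h11, h12, h21, h22, m11, m12, m21, m22]
    rw [M.str.mu_symm b₁ y', M.str.mu_symm b₂ y']
    module
  -- preservation of `alphaNeg`
  have anP : ∀ x, M.str.alphaNeg (swapNeg M a₁ a₂ b₁ b₂ x)
      = M.str.alphaNeg x := by
    intro x
    rw [swapNeg_apply, map_add, map_zsmul, map_sub, al1, al2]
    simp
  -- preservation of `alphaPos`
  have apP : ∀ y, M.str.alphaPos (swapPos M a₁ a₂ b₁ b₂ y)
      = M.str.alphaPos y := by
    intro y
    have E1 : M.str.mu y ((M.str.lam a₂ y - M.str.lam a₁ y) • (b₁ - b₂))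
        = (M.str.lam a₂ y - M.str.lam a₁ y) • M.str.mu y b₁
          - (M.str.lam a₂ y - M.str.lam a₁ y) • M.str.mu y b₂ := by
      simp only [map_zsmul, map_sub, smul_sub]
    have E2 : M.str.mu (y + (M.str.lam a₂ y - M.str.lam a₁ y) • (b₁ - b₂))
        (M.carrier.tau (a₂ - a₁) (M.str.mu y b₁))
        = P.eps • ((M.str.lam a₁ y - M.str.lam a₂ y) • M.str.mu y b₁) := by
      rw [mu_addl, mu_sl, mt', mt', lam_subl, lam_subl]
      simp only [map_sub, AddMonoidHom.sub_apply, h11, h12, h21, h22]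
      module
    have E3 : M.str.mu (y + (M.str.lam a₂ y - M.str.lam a₁ y) • (b₁ - b₂)
          + M.carrier.tau (a₂ - a₁) (M.str.mu y b₁))
        (M.carrier.tau (a₁ - a₂) (M.str.mu y b₂))
        = P.eps • ((M.str.lam a₂ y - M.str.lam a₁ y) • M.str.mu y b₂) := by
      rw [mu_addl, mu_addl, mu_sl, mt', mt', mtl, lt, lam_subl, lam_subl]
      simp only [map_sub, AddMonoidHom.sub_apply, h11, h12, h21, h22,
        zero_smul]
      module
    rw [swapPos_apply, M.str.alphaPos_add, M.str.alphaPos_add,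
      M.str.alphaPos_add, apsmul (b₁ - b₂) hza hzz, hTz _ _ hd21,
      hTz _ _ hd12, E1, E2, E3, hbd1, hbd1, map_sub, map_zsmul, map_zsmul]
    module
  -- assemble the automorphism
  refine ⟨⟨⟨⟨swapNeg M a₁ a₂ b₁ b₂, swapPos M a₁ a₂ b₁ b₂, hcomm⟩,
      ⟨lamP, muP, anP, apP⟩⟩,
    ⟨⟨swapNeg M a₁ a₂ b₁ b₂, swapPos M a₁ a₂ b₁ b₂, hcomm⟩,
      ⟨lamP, muP, anP, apP⟩⟩,
    invn, invn, invp, invp⟩, ?_, ?_⟩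
  · show swapNeg M a₁ a₂ b₁ b₂ a₂ = a₁
    rw [swapNeg_apply, h22, h21]
    module
  · show swapPos M a₁ a₂ b₁ b₂ b₂ = b₁
    rw [swapPos_apply, h22, h12, m21, m22, map_zero, map_zero]
    module

end Transitivity

section OrthStep

variable {H : Type} [AddCommGroup H] [AddGroup.FG H] {P : FormParameter H}

/-- Any element of `W¹₋` is an integer multiple of the generator `a`. -/
theorem w1_neg_decomp (x : Fin 1 → ℤ) :
    x = x 0 • (Pi.single 0 1 : Fin 1 → ℤ) := by
  funext i
  have hi : i = 0 := Subsingleton.elim i 0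
  subst hi
  simp

/-- Any element of `W¹₊` decomposes as `n • b + τ(a, h)`. -/
theorem w1_pos_decomp (y : (Fin 1 → ℤ) × (Fin 1 → H)) :
    y = y.1 0 • ((Pi.single 0 1, 0) : (Fin 1 → ℤ) × (Fin 1 → H))
      + (stdPair H 1).tau (Pi.single 0 1) (y.2 0) := by
  have htau : (stdPair H 1).tau (Pi.single 0 1) (y.2 0)
      = (0, fun i => (Pi.single 0 1 : Fin 1 → ℤ) i • y.2 0) := rfl
  rw [htau]
  refine Prod.ext_iff.mpr ⟨?_, ?_⟩
  · funext i
    have hi : i = 0 := Subsingleton.elim i 0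
    subst hi
    simp
  · funext i
    have hi : i = 0 := Subsingleton.elim i 0
    subst hi
    simp

/-- Two morphisms `W¹ → M` with orthogonal images differ by an automorphism
of `M`. -/
theorem orth_step {M : WallForm P} (f g : WallHom (stdWall P 1) M)
    (ho : OrthogonalIn M.str f.hom.rangeSub g.hom.rangeSub) :
    ∃ Φ : WallIso M M,
      (∀ x, f.hom.neg x = Φ.toHom.hom.neg (g.hom.neg x)) ∧
      (∀ y, f.hom.pos y = Φ.toHom.hom.pos (g.hom.pos y)) := by
  have std11 : (stdWall P 1).str.lam (Pi.single 0 1) (Pi.single 0 1, 0) = 1 := by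
    show ∑ i, (Pi.single 0 1 : Fin 1 → ℤ) i * (Pi.single 0 1 : Fin 1 → ℤ) i = 1
    simp
  have stdmu : (stdWall P 1).str.mu (Pi.single 0 1, 0) (Pi.single 0 1, 0) = 0 := by
    show (∑ i, (Pi.single 0 1 : Fin 1 → ℤ) i • (0 : Fin 1 → H) i)
      + P.eps • ∑ i, (Pi.single 0 1 : Fin 1 → ℤ) i • (0 : Fin 1 → H) i = 0
    simp
  have stdan : (stdWall P 1).str.alphaNeg (Pi.single 0 1) = 0 := rfl
  have stdap : (stdWall P 1).str.alphaPos (Pi.single 0 1, 0) = 0 := by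
    simp [stdWall, AddMonoidHom.coe_mk, ZeroHom.coe_mk]
  have h11 : M.str.lam (f.hom.neg (Pi.single 0 1)) (f.hom.pos (Pi.single 0 1, 0)) = 1 := by
    exact (f.isWall.1 _ _ ).trans std11
  have h22 : M.str.lam (g.hom.neg (Pi.single 0 1)) (g.hom.pos (Pi.single 0 1, 0)) = 1 := by
    exact (g.isWall.1 _ _ ).trans std11
  have m11 : M.str.mu (f.hom.pos (Pi.single 0 1, 0)) (f.hom.pos (Pi.single 0 1, 0)) = 0 := by
    exact (f.isWall.2.1 _ _ ).trans stdmu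
  have m22 : M.str.mu (g.hom.pos (Pi.single 0 1, 0)) (g.hom.pos (Pi.single 0 1, 0)) = 0 := by
    exact (g.isWall.2.1 _ _ ).trans stdmu
  have al1 : M.str.alphaNeg (f.hom.neg (Pi.single 0 1)) = 0 := by
    exact (f.isWall.2.2.1 _ ).trans stdan
  have al2 : M.str.alphaNeg (g.hom.neg (Pi.single 0 1)) = 0 := by
    exact (g.isWall.2.2.1 _ ).trans stdan
  have ap1 : M.str.alphaPos (f.hom.pos (Pi.single 0 1, 0)) = 0 := by
    exact (f.isWall.2.2.2 _ ).trans stdap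
  have ap2 : M.str.alphaPos (g.hom.pos (Pi.single 0 1, 0)) = 0 := by
    exact (g.isWall.2.2.2 _ ).trans stdap
  have h12 : M.str.lam (f.hom.neg (Pi.single 0 1)) (g.hom.pos (Pi.single 0 1, 0)) = 0 :=
    ho.2.2.1 ⟨Pi.single 0 1, rfl⟩ _ ⟨(Pi.single 0 1, 0), rfl⟩
  have h21 : M.str.lam (g.hom.neg (Pi.single 0 1)) (f.hom.pos (Pi.single 0 1, 0)) = 0 :=
    (ho.2.2.2.1 ⟨(Pi.single 0 1, 0), rfl⟩).1 _ ⟨Pi.single 0 1, rfl⟩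
  have m12 : M.str.mu (f.hom.pos (Pi.single 0 1, 0)) (g.hom.pos (Pi.single 0 1, 0)) = 0 :=
    (ho.2.2.2.1 ⟨(Pi.single 0 1, 0), rfl⟩).2 _ ⟨(Pi.single 0 1, 0), rfl⟩
  have m21 : M.str.mu (g.hom.pos (Pi.single 0 1, 0)) (f.hom.pos (Pi.single 0 1, 0)) = 0 := by
    rw [M.str.mu_symm, m12, smul_zero]
  obtain ⟨Φ, hΦa, hΦb⟩ := swap_exists M (f.hom.neg (Pi.single 0 1))
    (g.hom.neg (Pi.single 0 1)) (f.hom.pos (Pi.single 0 1, 0))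
    (g.hom.pos (Pi.single 0 1, 0)) h11 h22 h12 h21 m11 m22 m12 m21 al1 al2 ap1 ap2
  have hΦt : ∀ h : H, Φ.toHom.hom.pos
      (M.carrier.tau (g.hom.neg (Pi.single 0 1)) h)
      = M.carrier.tau (f.hom.neg (Pi.single 0 1)) h := by
    intro h
    rw [Φ.toHom.hom.comm, hΦa]
  refine ⟨Φ, fun x => ?_, fun y => ?_⟩
  · have key : ∀ (φ : (stdWall P 1).carrier.Neg →+ M.carrier.Neg)
        (x : (stdWall P 1).carrier.Neg), φ x = (x 0) • φ (Pi.single 0 1) := by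
      intro φ x
      refine (congrArg φ (w1_neg_decomp x)).trans ?_
      exact map_zsmul φ _ _
    rw [key f.hom.neg x, key g.hom.neg x, map_zsmul, hΦa]
  · have fcomm : ∀ x h, f.hom.pos ((stdPair H 1).tau x h)
        = M.carrier.tau (f.hom.neg x) h := f.hom.comm
    have gcomm : ∀ x h, g.hom.pos ((stdPair H 1).tau x h)
        = M.carrier.tau (g.hom.neg x) h := g.hom.comm
    have key2 : ∀ (φ : (stdWall P 1).carrier.Pos →+ M.carrier.Pos)
        (y : (stdWall P 1).carrier.Pos), φ y = y.1 0 • φ (Pi.single 0 1, 0)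
          + φ ((stdPair H 1).tau (Pi.single 0 1) (y.2 0)) := by
      intro φ y
      refine (congrArg φ (w1_pos_decomp y)).trans ?_
      exact (map_add φ _ _).trans (congrArg (· + _) (map_zsmul φ _ _))
    rw [key2 f.hom.pos y, key2 g.hom.pos y, fcomm, gcomm, map_add, map_zsmul, hΦb, hΦt]

end OrthStep

/-- **Transitivity.** If the complex `L(M)` is connected (any
two morphisms `W → M` are joined by a finite chain of morphisms in which
consecutive ones have orthogonal images), then for any two morphisms
`f₁, f₂ : W → M` there is an automorphism `Φ` of `M` with `f₁ = Φ ∘ f₂`. -/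
theorem statement_6 {H : Type} [AddCommGroup H] [AddGroup.FG H]
    (P : FormParameter H) (M : WallForm P)
    (hconn : ∀ f f' : WallHom (stdWall P 1) M,
      Relation.ReflTransGen
        (fun a b : WallHom (stdWall P 1) M =>
          OrthogonalIn M.str a.hom.rangeSub b.hom.rangeSub) f f')
    (f₁ f₂ : WallHom (stdWall P 1) M) :
    ∃ Φ : WallIso M M,
      (∀ x, f₁.hom.neg x = Φ.toHom.hom.neg (f₂.hom.neg x)) ∧
      (∀ y, f₁.hom.pos y = Φ.toHom.hom.pos (f₂.hom.pos y)) := by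
  have h := hconn f₁ f₂
  clear hconn
  induction h with
  | refl => exact ⟨wallIsoId M, fun _ => rfl, fun _ => rfl⟩
  | @tail b c _hab hbc ih =>
      obtain ⟨Φ, hn, hp⟩ := ih
      obtain ⟨Ψ, hn', hp'⟩ := orth_step b c hbc
      refine ⟨wallIsoComp Φ Ψ, fun x => ?_, fun y => ?_⟩
      · show f₁.hom.neg x = Φ.toHom.hom.neg (Ψ.toHom.hom.neg (c.hom.neg x))
        rw [hn x, hn' x]
      · show f₁.hom.pos y = Φ.toHom.hom.pos (Ψ.toHom.hom.pos (c.hom.pos y))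
        rw [hp y, hp' y]
end
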